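/- arXiv:1601.01259 — 7 statements merged into one kernel-verified Lean document; each statement's English description precedes it below -/
import Mathlib

section
/- Let D_n ⊆ M_n(ℂ) be the operator system of diagonal n×n complex matrices. For every k ≥ 2, D_n has no quantum k-anticlique; that is, there is no orthogonal projection P ∈ M_n(ℂ) of rank k ≥ 2 with P D_n P = ℂ·P. -/
open Matrix

/-- The compression map `A ↦ P * A * P`. -/
noncomputable def compress {m : Type*} [Fintype m] (P : Matrix m m ℂ) :
    Matrix m m ℂ →ₗ[ℂ] Matrix m m ℂ where
  toFun A := P * A * P
  map_add' A B := by simp [Matrix.mul_add, Matrix.add_mul]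
  map_smul' c A := by simp [Matrix.mul_smul, Matrix.smul_mul]

/-- An operator system: a subspace of matrices containing the identity and
closed under conjugate transpose. -/
def IsOperatorSystem {m : Type*} [Fintype m] [DecidableEq m]
    (V : Submodule ℂ (Matrix m m ℂ)) : Prop :=
  (1 : Matrix m m ℂ) ∈ V ∧ ∀ A ∈ V, Aᴴ ∈ V

/-- The operator system `D_n` of diagonal matrices. -/
noncomputable def diagMatrices (n : ℕ) : Submodule ℂ (Matrix (Fin n) (Fin n) ℂ) where
  carrier := {A | A.IsDiag}
  add_mem' := Matrix.IsDiag.add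
  zero_mem' := Matrix.isDiag_zero
  smul_mem' c _ h := h.smul c

/-- For `k ≥ 2`, the diagonal operator system `D_n` has no quantum
`k`-anticlique. -/
theorem diag_no_quantum_anticlique (n k : ℕ) (hk : 2 ≤ k)
    (P : Matrix (Fin n) (Fin n) ℂ) (hP : P * P = P) (hP' : Pᴴ = P)
    (hrank : P.rank = k) :
    (diagMatrices n).map (compress P) ≠ Submodule.span ℂ {P} := by
  intro h
  have key : ∀ i : Fin n, ∃ c : ℂ, P * Matrix.single i i 1 * P = c • P := by
    intro i
    have hmem : (Matrix.single i i (1:ℂ)) ∈ diagMatrices n := by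
      intro a b hab
      exact Matrix.single_apply_of_ne _ _ _ _ _ (by rintro ⟨rfl, rfl⟩; exact hab rfl)
    have hm : compress P (Matrix.single i i 1) ∈ (diagMatrices n).map (compress P) :=
      Submodule.mem_map_of_mem hmem
    rw [h, Submodule.mem_span_singleton] at hm
    obtain ⟨c, hc⟩ := hm
    exact ⟨c, hc.symm⟩
  by_cases hc0 : ∀ i, P * Matrix.single i i 1 * P = 0
  · have hone : (1 : Matrix (Fin n) (Fin n) ℂ) = ∑ i, Matrix.single i i 1 := by
      ext a b
      by_cases hab : a = b
      · subst hab
        simp [Matrix.sum_apply, Matrix.one_apply, Matrix.single, Matrix.of_apply]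
      · simp [Matrix.sum_apply, Matrix.one_apply, hab, Matrix.single, Matrix.of_apply,
          fun i => (show ¬(i = a ∧ i = b) by rintro ⟨rfl, rfl⟩; exact hab rfl)]
    have hzero : P = 0 := by
      calc P = P * 1 * P := by rw [Matrix.mul_one, hP]
        _ = ∑ i, P * Matrix.single i i 1 * P := by
            rw [hone, Finset.mul_sum, Finset.sum_mul]
        _ = 0 := by simp [hc0]
    rw [hzero, Matrix.rank_zero] at hrank
    omega
  · push_neg at hc0
    obtain ⟨i, hi⟩ := hc0
    obtain ⟨c, hc⟩ := key i
    have hcne : c ≠ 0 := by rintro rfl; rw [zero_smul] at hc; exact hi hc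
    have hPr : P = ((c⁻¹ • P) * Matrix.single i i 1) * P := by
      rw [Matrix.smul_mul, Matrix.smul_mul, hc, smul_smul, inv_mul_cancel₀ hcne, one_smul]
    have hE : (Matrix.single i i (1:ℂ)).rank ≤ 1 := by
      rw [Matrix.single_eq_single_vecMulVec_single, vecMulVec_eq (Fin 1)]
      exact (Matrix.rank_mul_le_left _ _).trans
        ((Matrix.rank_le_card_width _).trans_eq (by simp))
    have hr1 : P.rank ≤ 1 := by
      calc P.rank = (((c⁻¹ • P) * Matrix.single i i 1) * P).rank := by rw [← hPr]
        _ ≤ ((c⁻¹ • P) * Matrix.single i i 1).rank := Matrix.rank_mul_le_left _ _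
        _ ≤ (Matrix.single i i (1:ℂ)).rank := Matrix.rank_mul_le_right _ _
        _ ≤ 1 := hE
    rw [hrank] at hr1
    omega
end

section
/- If n ≥ k² + k − 1, then the diagonal operator system D_n ⊆ M_n(ℂ) has a quantum k-clique: there exists an orthogonal projection P ∈ M_n(ℂ) of rank k such that dim(P D_n P) = k², equivalently P D_n P = P M_n(ℂ) P. -/
open Matrix

namespace DiagClique

open scoped ComplexOrder

/-- The family of vectors in `ℂ^k` whose self-outer-products span `M_k(ℂ)`. -/
noncomputable def uvec (k : ℕ) (a b : Fin k) : Fin k → ℂ := fun c =>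
  if a = b then (if c = a then 1 else 0)
  else if a < b then (if c = a then 1 else 0) + (if c = b then 1 else 0)
  else (if c = b then 1 else 0) + Complex.I * (if c = a then 1 else 0)

/-- Encoding of a pair `(a,b)` as an index in `Fin n`. -/
def encIdx (k n : ℕ) (hkn : k * k ≤ n) (a b : Fin k) : Fin n :=
  ⟨(b : ℕ) + (a : ℕ) * k, by
    calc (b : ℕ) + (a : ℕ) * k < k + (a : ℕ) * k := Nat.add_lt_add_right b.isLt _
      _ = ((a : ℕ) + 1) * k := by ring
      _ ≤ k * k := Nat.mul_le_mul_right _ a.isLt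
      _ ≤ n := hkn⟩

/-- The `n × k` matrix whose row `encIdx a b` is `uvec a b`, other rows zero. -/
noncomputable def Vmat (k n : ℕ) (hk : 0 < k) : Matrix (Fin n) (Fin k) ℂ := fun t c =>
  if h : (t : ℕ) < k * k then
    uvec k ⟨(t : ℕ) / k, (Nat.div_lt_iff_lt_mul hk).2 h⟩ ⟨(t : ℕ) % k, Nat.mod_lt _ hk⟩ c
  else 0

lemma Vmat_enc (k n : ℕ) (hk : 0 < k) (hkn : k * k ≤ n) (a b : Fin k) (c : Fin k) :
    Vmat k n hk (encIdx k n hkn a b) c = uvec k a b c := by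
  have hlt : (b : ℕ) + (a : ℕ) * k < k * k := by
    calc (b : ℕ) + (a : ℕ) * k < k + (a : ℕ) * k := Nat.add_lt_add_right b.isLt _
      _ = ((a : ℕ) + 1) * k := by ring
      _ ≤ k * k := Nat.mul_le_mul_right _ a.isLt
  have hdiv : ((b : ℕ) + (a : ℕ) * k) / k = (a : ℕ) := by
    rw [Nat.add_mul_div_right _ _ hk, Nat.div_eq_of_lt b.isLt, zero_add]
  have hmod : ((b : ℕ) + (a : ℕ) * k) % k = (b : ℕ) := by
    rw [Nat.add_mul_mod_self_right, Nat.mod_eq_of_lt b.isLt]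
  simp only [Vmat, encIdx, dif_pos hlt]
  refine (dif_pos hlt).trans ?_
  congr 1 <;> [exact Fin.ext hdiv; exact Fin.ext hmod]

/-- The Gram matrix. -/
noncomputable def Gmat (k n : ℕ) (hk : 0 < k) : Matrix (Fin k) (Fin k) ℂ :=
  (Vmat k n hk)ᴴ * Vmat k n hk

lemma uvec_diag (k : ℕ) (a : Fin k) : uvec k a a = Pi.single a 1 := by
  funext c; simp [uvec, Pi.single_apply]

lemma Vmat_mulVec_injective (k n : ℕ) (hk : 0 < k) (hkn : k * k ≤ n) :
    Function.Injective (Vmat k n hk).mulVec := by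
  have key : ∀ x : Fin k → ℂ, (Vmat k n hk) *ᵥ x = 0 → x = 0 := by
    intro x hx
    funext a
    have h1 := congrFun hx (encIdx k n hkn a a)
    simp only [mulVec, dotProduct, Pi.zero_apply] at h1
    rw [Finset.sum_congr rfl (fun c _ => by
      rw [Vmat_enc k n hk hkn a a c, uvec_diag])] at h1
    simpa [Pi.single_apply] using h1
  intro x y h
  have h2 : Vmat k n hk *ᵥ (x - y) = 0 := by rw [Matrix.mulVec_sub, h, sub_self]
  exact sub_eq_zero.1 (key _ h2)

lemma Gmat_isUnit (k n : ℕ) (hk : 0 < k) (hkn : k * k ≤ n) : IsUnit (Gmat k n hk) := by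
  rw [← Matrix.mulVec_injective_iff_isUnit]
  have key : ∀ x : Fin k → ℂ, (Gmat k n hk) *ᵥ x = 0 → x = 0 := by
    intro x hx
    apply Vmat_mulVec_injective k n hk hkn (a₂ := 0)
    rw [Matrix.mulVec_zero]
    have h0 : star x ⬝ᵥ (Gmat k n hk) *ᵥ x = 0 := by rw [hx, dotProduct_zero]
    rwa [Gmat, ← Matrix.mulVec_mulVec, Matrix.dotProduct_mulVec,
      Matrix.vecMul_conjTranspose, star_star, dotProduct_star_self_eq_zero] at h0
  intro x y h
  have h2 : Gmat k n hk *ᵥ (x - y) = 0 := by rw [Matrix.mulVec_sub, h, sub_self]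
  exact sub_eq_zero.1 (key _ h2)

/-- The diagonal-compression map `d ↦ Vᴴ (diag d) V`. -/
noncomputable def Lmap (k n : ℕ) (hk : 0 < k) : (Fin n → ℂ) →ₗ[ℂ] Matrix (Fin k) (Fin k) ℂ where
  toFun d := (Vmat k n hk)ᴴ * Matrix.diagonal d * Vmat k n hk
  map_add' d e := by
    have h : Matrix.diagonal (d + e) = Matrix.diagonal d + Matrix.diagonal e := by
      ext i j; by_cases h : i = j <;> simp [Matrix.diagonal_apply, h]
    rw [h, Matrix.mul_add, Matrix.add_mul]
  map_smul' c d := by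
    have h : Matrix.diagonal (c • d) = c • Matrix.diagonal d := by
      ext i j; by_cases h : i = j <;> simp [Matrix.diagonal_apply, h]
    rw [h, RingHom.id_apply, Matrix.mul_smul, Matrix.smul_mul]


lemma stdb_apply (k : ℕ) (i j x y : Fin k) :
    Matrix.single i j (1:ℂ) x y = (if x = i then (1:ℂ) else 0) * (if y = j then 1 else 0) := by
  by_cases h1 : i = x <;> by_cases h2 : j = y
  · simp [Matrix.single, h1, h2]
  · simp [Matrix.single, h1, h2, Ne.symm h2]
  · simp [Matrix.single, h1, h2, Ne.symm h1]
  · simp [Matrix.single, h1, h2, Ne.symm h1, Ne.symm h2]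

lemma outer_diag (k : ℕ) (a : Fin k) :
    (Matrix.of fun x y => star (uvec k a a x) * uvec k a a y) = Matrix.single a a (1:ℂ) := by
  ext x y
  rw [stdb_apply]
  simp only [Matrix.of_apply, uvec, if_pos rfl]
  by_cases hx : x = a <;> by_cases hy : y = a <;> simp [hx, hy]

lemma outer_comb (k : ℕ) (a b : Fin k) (hab : a < b) :
    Matrix.single a b (1:ℂ) =
      (1/2 : ℂ) • (Matrix.of fun x y => star (uvec k a b x) * uvec k a b y)
      + (-(Complex.I)/2) • (Matrix.of fun x y => star (uvec k b a x) * uvec k b a y)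
      + ((Complex.I - 1)/2) • (Matrix.single a a (1:ℂ) + Matrix.single b b (1:ℂ)) := by
  have hne : a ≠ b := ne_of_lt hab
  have hne' : b ≠ a := hne.symm
  have hnlt : ¬ b < a := lt_asymm hab
  have hu1 : ∀ c, uvec k a b c = (if c = a then 1 else 0) + (if c = b then 1 else 0) := by
    intro c; simp [uvec, hne, hab]
  have hu2 : ∀ c, uvec k b a c = (if c = a then 1 else 0) + Complex.I * (if c = b then 1 else 0) := by
    intro c; simp [uvec, hne', hnlt]
  ext x y
  simp only [Matrix.add_apply, Matrix.smul_apply, smul_eq_mul, Matrix.of_apply, hu1, hu2,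
    stdb_apply]
  by_cases hx : x = a <;> by_cases hx2 : x = b <;> by_cases hy : y = a <;> by_cases hy2 : y = b <;>
    (try exact absurd (hx.symm.trans hx2) hne) <;>
    (try exact absurd (hy.symm.trans hy2) hne) <;>
    simp [hx, hx2, hy, hy2, hne, hne', Complex.conj_I] <;>
    ring_nf <;> simp [Complex.ext_iff] <;> ring_nf <;> norm_num

lemma outer_comb' (k : ℕ) (a b : Fin k) (hab : a < b) :
    Matrix.single b a (1:ℂ) =
      (1/2 : ℂ) • (Matrix.of fun x y => star (uvec k a b x) * uvec k a b y)
      + ((Complex.I)/2) • (Matrix.of fun x y => star (uvec k b a x) * uvec k b a y)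
      + ((-1 - Complex.I)/2) • (Matrix.single a a (1:ℂ) + Matrix.single b b (1:ℂ)) := by
  have hne : a ≠ b := ne_of_lt hab
  have hne' : b ≠ a := hne.symm
  have hnlt : ¬ b < a := lt_asymm hab
  have hu1 : ∀ c, uvec k a b c = (if c = a then 1 else 0) + (if c = b then 1 else 0) := by
    intro c; simp [uvec, hne, hab]
  have hu2 : ∀ c, uvec k b a c = (if c = a then 1 else 0) + Complex.I * (if c = b then 1 else 0) := by
    intro c; simp [uvec, hne', hnlt]
  ext x y
  simp only [Matrix.add_apply, Matrix.smul_apply, smul_eq_mul, Matrix.of_apply, hu1, hu2,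
    stdb_apply]
  by_cases hx : x = a <;> by_cases hx2 : x = b <;> by_cases hy : y = a <;> by_cases hy2 : y = b <;>
    (try exact absurd (hx.symm.trans hx2) hne) <;>
    (try exact absurd (hy.symm.trans hy2) hne) <;>
    simp [hx, hx2, hy, hy2, hne, hne', Complex.conj_I] <;>
    ring_nf <;> simp [Complex.ext_iff] <;> ring_nf <;> norm_num

lemma Lmap_single (k n : ℕ) (hk : 0 < k) (t : Fin n) :
    Lmap k n hk (Pi.single t 1) =
      Matrix.of fun x y => star (Vmat k n hk t x) * Vmat k n hk t y := by
  ext x y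
  simp [Lmap, Matrix.mul_apply, Matrix.diagonal_apply, Pi.single_apply,
    Finset.sum_ite_eq, Finset.sum_ite_eq', ite_mul, mul_ite]

lemma outer_mem_range (k n : ℕ) (hk : 0 < k) (hkn : k * k ≤ n) (a b : Fin k) :
    (Matrix.of fun x y => star (uvec k a b x) * uvec k a b y) ∈ LinearMap.range (Lmap k n hk) := by
  refine ⟨Pi.single (encIdx k n hkn a b) 1, ?_⟩
  rw [Lmap_single]
  ext x y
  simp [Vmat_enc k n hk hkn]

lemma stdb_mem_range (k n : ℕ) (hk : 0 < k) (hkn : k * k ≤ n) (i j : Fin k) :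
    Matrix.single i j (1:ℂ) ∈ LinearMap.range (Lmap k n hk) := by
  rcases lt_trichotomy i j with h | rfl | h
  · rw [outer_comb k i j h]
    refine Submodule.add_mem _ (Submodule.add_mem _
      (Submodule.smul_mem _ _ (outer_mem_range k n hk hkn i j))
      (Submodule.smul_mem _ _ (outer_mem_range k n hk hkn j i)))
      (Submodule.smul_mem _ _ (Submodule.add_mem _ ?_ ?_))
    · rw [← outer_diag]; exact outer_mem_range k n hk hkn i i
    · rw [← outer_diag]; exact outer_mem_range k n hk hkn j j
  · rw [← outer_diag]; exact outer_mem_range k n hk hkn i i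
  · rw [outer_comb' k j i h]
    refine Submodule.add_mem _ (Submodule.add_mem _
      (Submodule.smul_mem _ _ (outer_mem_range k n hk hkn j i))
      (Submodule.smul_mem _ _ (outer_mem_range k n hk hkn i j)))
      (Submodule.smul_mem _ _ (Submodule.add_mem _ ?_ ?_))
    · rw [← outer_diag]; exact outer_mem_range k n hk hkn j j
    · rw [← outer_diag]; exact outer_mem_range k n hk hkn i i

lemma Lmap_surjective (k n : ℕ) (hk : 0 < k) (hkn : k * k ≤ n) :
    Function.Surjective (Lmap k n hk) := by
  rw [← LinearMap.range_eq_top, eq_top_iff]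
  intro X _
  rw [matrix_eq_sum_single X]
  refine Submodule.sum_mem _ fun i _ => Submodule.sum_mem _ fun j _ => ?_
  have h : Matrix.single i j (X i j) = (X i j) • Matrix.single i j (1:ℂ) := by
    rw [smul_single, smul_eq_mul, mul_one]
  rw [h]
  exact Submodule.smul_mem _ _ (stdb_mem_range k n hk hkn i j)

lemma main (k n : ℕ) (hk : 0 < k) (hkn : k * k ≤ n) :
    ∃ P : Matrix (Fin n) (Fin n) ℂ, P * P = P ∧ Pᴴ = P ∧ P.rank = k ∧
      Module.finrank ℂ ((diagMatrices n).map (compress P)) = k * k := by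
  set V : Matrix (Fin n) (Fin k) ℂ := Vmat k n hk with hV
  set G : Matrix (Fin k) (Fin k) ℂ := Gmat k n hk with hG
  have hGdef : G = Vᴴ * V := rfl
  have hGu : IsUnit G := Gmat_isUnit k n hk hkn
  have hGdet : IsUnit G.det := (Matrix.isUnit_iff_isUnit_det G).1 hGu
  have hGG : G * G⁻¹ = 1 := Matrix.mul_nonsing_inv G hGdet
  have hG'G : G⁻¹ * G = 1 := Matrix.nonsing_inv_mul G hGdet
  have hGH : Gᴴ = G := Matrix.isHermitian_conjTranspose_mul_self V
  refine ⟨V * G⁻¹ * Vᴴ, ?_, ?_, ?_, ?_⟩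
  · have h1 : (V * G⁻¹ * Vᴴ) * (V * G⁻¹ * Vᴴ) = V * (G⁻¹ * G * G⁻¹) * Vᴴ := by
      rw [hGdef]; simp only [Matrix.mul_assoc]
    rw [h1, hG'G, Matrix.one_mul]
  · rw [Matrix.conjTranspose_mul, Matrix.conjTranspose_mul, Matrix.conjTranspose_conjTranspose,
      Matrix.conjTranspose_nonsing_inv, hGH, Matrix.mul_assoc]
  · have hVrank : V.rank = k := by
      have h1 := Matrix.rank_conjTranspose_mul_self V
      rw [← hGdef] at h1
      rw [← h1, Matrix.rank_of_isUnit G hGu, Fintype.card_fin]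
    have hPV : (V * G⁻¹ * Vᴴ) * V = V := by
      have h1 : (V * G⁻¹ * Vᴴ) * V = V * (G⁻¹ * G) := by
        rw [hGdef]; simp only [Matrix.mul_assoc]
      rw [h1, hG'G, Matrix.mul_one]
    apply le_antisymm
    · calc (V * G⁻¹ * Vᴴ).rank ≤ (V * G⁻¹).rank := Matrix.rank_mul_le_left _ _
        _ ≤ V.rank := Matrix.rank_mul_le_left _ _
        _ = k := hVrank
    · calc k = V.rank := hVrank.symm
        _ = ((V * G⁻¹ * Vᴴ) * V).rank := by rw [hPV]
        _ ≤ (V * G⁻¹ * Vᴴ).rank := Matrix.rank_mul_le_left _ _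
  · -- finrank computation
    let Θ : Matrix (Fin k) (Fin k) ℂ →ₗ[ℂ] Matrix (Fin n) (Fin n) ℂ :=
      { toFun := fun X => V * (G⁻¹ * X * G⁻¹) * Vᴴ
        map_add' := fun X Y => by
          simp only [Matrix.mul_add, Matrix.add_mul]
        map_smul' := fun c X => by
          simp only [Matrix.mul_smul, Matrix.smul_mul, RingHom.id_apply] }
    have hleft : ∀ X, Vᴴ * (Θ X) * V = X := by
      intro X
      have h1 : Vᴴ * (V * (G⁻¹ * X * G⁻¹) * Vᴴ) * V = (G * G⁻¹) * (X * (G⁻¹ * G)) := by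
        rw [hGdef]; simp only [Matrix.mul_assoc]
      show Vᴴ * (V * (G⁻¹ * X * G⁻¹) * Vᴴ) * V = X
      rw [h1, hGG, hG'G, Matrix.one_mul, Matrix.mul_one]
    have hinj : Function.Injective Θ := by
      intro X Y h
      have h2 := congrArg (fun Z => Vᴴ * Z * V) h
      simpa only [hleft] using h2
    have hmap : (diagMatrices n).map (compress (V * G⁻¹ * Vᴴ)) = LinearMap.range Θ := by
      apply le_antisymm
      · rintro _ ⟨A, _, rfl⟩
        refine ⟨Vᴴ * A * V, ?_⟩
        show V * (G⁻¹ * (Vᴴ * A * V) * G⁻¹) * Vᴴ = compress (V * G⁻¹ * Vᴴ) A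
        show V * (G⁻¹ * (Vᴴ * A * V) * G⁻¹) * Vᴴ = (V * G⁻¹ * Vᴴ) * A * (V * G⁻¹ * Vᴴ)
        simp only [Matrix.mul_assoc]
      · rintro _ ⟨X, rfl⟩
        obtain ⟨d, hd⟩ := Lmap_surjective k n hk hkn X
        refine ⟨Matrix.diagonal d, Matrix.isDiag_diagonal d, ?_⟩
        show (V * G⁻¹ * Vᴴ) * Matrix.diagonal d * (V * G⁻¹ * Vᴴ) = Θ X
        rw [← hd]
        show (V * G⁻¹ * Vᴴ) * Matrix.diagonal d * (V * G⁻¹ * Vᴴ)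
          = V * (G⁻¹ * (Vᴴ * Matrix.diagonal d * V) * G⁻¹) * Vᴴ
        simp only [Matrix.mul_assoc]
    rw [hmap, LinearMap.finrank_range_of_inj hinj]
    rw [Module.finrank_matrix, Fintype.card_fin, Module.finrank_self, mul_one]

end DiagClique

/-- If `n ≥ k² + k - 1` then `D_n` has a quantum `k`-clique. -/
theorem diag_quantum_clique (n k : ℕ) (hn : k ^ 2 + k - 1 ≤ n) :
    ∃ P : Matrix (Fin n) (Fin n) ℂ, P * P = P ∧ Pᴴ = P ∧ P.rank = k ∧
      Module.finrank ℂ ((diagMatrices n).map (compress P)) = k ^ 2 := by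
  rcases Nat.eq_zero_or_pos k with rfl | hk
  · refine ⟨0, by simp, by simp, ?_, ?_⟩
    · simp [Matrix.rank_zero]
    · have h0 : (diagMatrices n).map (compress (0 : Matrix (Fin n) (Fin n) ℂ)) = ⊥ := by
        rw [eq_bot_iff]
        rintro _ ⟨A, _, rfl⟩
        show (0 : Matrix (Fin n) (Fin n) ℂ) * A * 0 ∈ (⊥ : Submodule ℂ _)
        simp
      rw [h0]
      simp
  · have hkn : k * k ≤ n := by
      have h2 : k ^ 2 = k * k := sq k
      omega
    obtain ⟨P, h1, h2, h3, h4⟩ := DiagClique.main k n hk hkn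
    exact ⟨P, h1, h2, h3, by rw [h4, ← sq]⟩
end

section
/- Let 𝒱_n = span{I_n, E_{11}, E_{12}, …, E_{1n}, E_{21}, …, E_{n1}} ⊆ M_n(ℂ), where E_{ij} is the matrix unit with 1 in entry (i,j) and 0 elsewhere. Then 𝒱_n has no quantum k-clique for any k ≥ 3: for every orthogonal projection P of rank k ≥ 3, dim(P𝒱_nP) < k². -/
open Matrix

/-- Left multiplication `vecMulVec v ·` as a linear map. -/
noncomputable def vmvL {m : Type*} (v : m → ℂ) : (m → ℂ) →ₗ[ℂ] Matrix m m ℂ where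
  toFun w := Matrix.vecMulVec v w
  map_add' w₁ w₂ := by ext i j; simp [Matrix.vecMulVec_apply, mul_add]
  map_smul' c w := by ext i j; simp [Matrix.vecMulVec_apply]; ring

noncomputable def vmvR {m : Type*} (w : m → ℂ) : (m → ℂ) →ₗ[ℂ] Matrix m m ℂ where
  toFun v := Matrix.vecMulVec v w
  map_add' v₁ v₂ := by ext i j; simp [Matrix.vecMulVec_apply, add_mul]
  map_smul' c v := by ext i j; simp [Matrix.vecMulVec_apply]; ring

/-- The operator system spanned by the identity together with the first row
and first column of matrix units has no quantum `k`-clique for `k ≥ 3`. -/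
theorem row_column_no_quantum_clique (n : ℕ) (hn : 0 < n) (k : ℕ) (hk : 3 ≤ k)
    (P : Matrix (Fin n) (Fin n) ℂ) (hP : P * P = P) (hP' : Pᴴ = P)
    (hrank : P.rank = k) :
    Module.finrank ℂ ((Submodule.span ℂ
      ({(1 : Matrix (Fin n) (Fin n) ℂ)}
        ∪ Set.range (fun j : Fin n => Matrix.single (⟨0, hn⟩ : Fin n) j (1 : ℂ))
        ∪ Set.range (fun i : Fin n => Matrix.single i (⟨0, hn⟩ : Fin n) (1 : ℂ)))).map
      (compress P)) < k ^ 2 := by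
  set e0 : Fin n := ⟨0, hn⟩
  set v : Fin n → ℂ := fun a => P a e0 with hv
  set w : Fin n → ℂ := fun b => P e0 b with hw
  -- the three bounding submodules
  set U₁ : Submodule ℂ (Matrix (Fin n) (Fin n) ℂ) := ℂ ∙ P with hU₁
  set R : Submodule ℂ (Fin n → ℂ) := LinearMap.range (Pᵀ).mulVecLin with hR
  set C : Submodule ℂ (Fin n → ℂ) := LinearMap.range P.mulVecLin with hC
  set U₂ : Submodule ℂ (Matrix (Fin n) (Fin n) ℂ) := R.map (vmvL v) with hU₂
  set U₃ : Submodule ℂ (Matrix (Fin n) (Fin n) ℂ) := C.map (vmvR w) with hU₃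
  have hcompute₂ : ∀ j : Fin n,
      P * Matrix.single e0 j (1 : ℂ) * P = Matrix.vecMulVec v (Pᵀ *ᵥ Pi.single j 1) := by
    intro j
    ext a b
    simp [Matrix.mul_apply, Matrix.single, Matrix.vecMulVec_apply,
      Matrix.mulVec_single, Finset.mul_sum, Finset.sum_mul]
    simp [Finset.sum_ite_eq, ite_and, Finset.sum_ite_eq']
    exact Or.inl rfl
  have hcompute₃ : ∀ i : Fin n,
      P * Matrix.single i e0 (1 : ℂ) * P = Matrix.vecMulVec (P *ᵥ Pi.single i 1) w := by
    intro i
    ext a b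
    simp [Matrix.mul_apply, Matrix.single, Matrix.vecMulVec_apply,
      Matrix.mulVec_single, Finset.mul_sum, Finset.sum_mul]
    simp [Finset.sum_ite_eq, ite_and, Finset.sum_ite_eq']
    exact Or.inl rfl
  have hle : (Submodule.span ℂ
      ({(1 : Matrix (Fin n) (Fin n) ℂ)}
        ∪ Set.range (fun j : Fin n => Matrix.single e0 j (1 : ℂ))
        ∪ Set.range (fun i : Fin n => Matrix.single i e0 (1 : ℂ)))).map
      (compress P) ≤ U₁ ⊔ U₂ ⊔ U₃ := by
    rw [Submodule.map_span, Submodule.span_le]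
    rintro x ⟨A, hA, rfl⟩
    rcases hA with (rfl | ⟨j, rfl⟩) | ⟨i, rfl⟩
    · apply Submodule.mem_sup_left; apply Submodule.mem_sup_left
      have : compress P 1 = P := by
        show P * 1 * P = P
        rw [Matrix.mul_one, hP]
      rw [this]
      exact Submodule.mem_span_singleton_self P
    · apply Submodule.mem_sup_left; apply Submodule.mem_sup_right
      refine ⟨Pᵀ *ᵥ Pi.single j 1, ⟨Pi.single j 1, rfl⟩, ?_⟩
      exact (hcompute₂ j).symm
    · apply Submodule.mem_sup_right
      refine ⟨P *ᵥ Pi.single i 1, ⟨Pi.single i 1, rfl⟩, ?_⟩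
      exact (hcompute₃ i).symm
  have h1 : Module.finrank ℂ U₁ ≤ 1 := by
    simpa using finrank_span_le_card ({P} : Set (Matrix (Fin n) (Fin n) ℂ))
  have h2 : Module.finrank ℂ U₂ ≤ k := by
    calc Module.finrank ℂ U₂ ≤ Module.finrank ℂ R := Submodule.finrank_map_le _ _
    _ = k := by rw [hR]; show (Pᵀ).rank = k; rw [Matrix.rank_transpose, hrank]
  have h3 : Module.finrank ℂ U₃ ≤ k := by
    calc Module.finrank ℂ U₃ ≤ Module.finrank ℂ C := Submodule.finrank_map_le _ _
    _ = k := hrank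
  have hmono := Submodule.finrank_mono hle
  have hsup : Module.finrank ℂ (U₁ ⊔ U₂ ⊔ U₃ : Submodule ℂ (Matrix (Fin n) (Fin n) ℂ))
      ≤ 1 + k + k := by
    calc Module.finrank ℂ (U₁ ⊔ U₂ ⊔ U₃ : Submodule ℂ (Matrix (Fin n) (Fin n) ℂ))
        ≤ Module.finrank ℂ (U₁ ⊔ U₂ : Submodule ℂ (Matrix (Fin n) (Fin n) ℂ))
          + Module.finrank ℂ U₃ := Submodule.finrank_add_le_finrank_add_finrank _ _
      _ ≤ Module.finrank ℂ U₁ + Module.finrank ℂ U₂ + Module.finrank ℂ U₃ := by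
          have := Submodule.finrank_add_le_finrank_add_finrank U₁ U₂
          omega
      _ ≤ 1 + k + k := by omega
  have : 1 + k + k < k ^ 2 := by nlinarith
  omega
end

section
/- Let 𝒱 = span{E_{11}, E_{12}, E_{13}, E_{14}} ⊂ M_4(ℂ), where E_{ij} denotes the matrix unit. Then for every orthogonal projection P ∈ M_4(ℂ) of rank 2, dim(P𝒱P) ≤ 2. (In particular, Theorem 3.3 does not extend to arbitrary four-dimensional subspaces of M_n(ℂ).) -/
open Matrix

/-- For `𝒱 = span{E₁₁, E₁₂, E₁₃, E₁₄} ⊂ M₄` and any rank-2 projection `P`,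
`dim(P𝒱P) ≤ 2`. -/
theorem four_dim_subspace_no_two_clique (P : Matrix (Fin 4) (Fin 4) ℂ)
    (hP : P * P = P) (hP' : Pᴴ = P) (hrank : P.rank = 2) :
    Module.finrank ℂ ((Submodule.span ℂ
      (Set.range fun j : Fin 4 => Matrix.single (0 : Fin 4) j (1 : ℂ))).map
      (compress P)) ≤ 2 := by
  classical
  set L : (Fin 4 → ℂ) →ₗ[ℂ] Matrix (Fin 4) (Fin 4) ℂ :=
    { toFun := fun w => Matrix.of fun i k => P i 0 * w k
      map_add' := by intros; ext i k; simp [mul_add]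
      map_smul' := by intros; ext i k; simp; ring } with hL
  have key : ∀ j : Fin 4, compress P (Matrix.single 0 j 1) = L (P j) := by
    intro j
    ext i k
    simp [compress, hL, Matrix.mul_apply, Matrix.single, ite_and, ite_mul,
      Finset.sum_ite_eq, Finset.sum_ite_eq']
  have himg : (Submodule.span ℂ (Set.range fun j : Fin 4 =>
        Matrix.single (0 : Fin 4) j (1 : ℂ))).map (compress P)
      = (Submodule.span ℂ (Set.range P)).map L := by
    have hset : (⇑(compress P)) '' (Set.range fun j : Fin 4 =>
        Matrix.single (0 : Fin 4) j (1 : ℂ)) = ⇑L '' Set.range P := by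
      rw [← Set.range_comp]; erw [← Set.range_comp]
      exact congrArg Set.range (funext key)
    rw [Submodule.map_span, Submodule.map_span, hset]
  rw [himg]
  have h1 : Module.finrank ℂ ((Submodule.span ℂ (Set.range P)).map L)
      ≤ Module.finrank ℂ (Submodule.span ℂ (Set.range P)) :=
    Submodule.finrank_map_le L _
  have h2 : Submodule.span ℂ (Set.range P) = LinearMap.range (Pᵀ).mulVecLin := by
    rw [Matrix.range_mulVecLin]; rfl
  have h3 : Module.finrank ℂ (Submodule.span ℂ (Set.range P)) = (Pᵀ).rank := by
    rw [h2]; rfl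
  rw [Matrix.rank_transpose, hrank] at h3
  omega
end

section
/- Let 𝒱 be an operator system contained in the diagonal matrices D_n ⊆ M_n(ℂ). If dim(𝒱) ≥ k² + k − 1, then 𝒱 has a quantum k-clique: there is a rank-k orthogonal projection P with dim(P𝒱P) = k². -/
open Matrix

namespace QCliqueAux

/-- Select coordinates on which a subspace of `ℂⁿ` of dimension `≥ r` surjects. -/
lemma exists_coords {n r : ℕ} (W' : Submodule ℂ (Fin n → ℂ))
    (h : r ≤ Module.finrank ℂ W') :
    ∃ g : Fin r → Fin n, Function.Injective g ∧
      ∀ c : Fin r → ℂ, ∃ w ∈ W', ∀ t, w (g t) = c t := by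
  classical
  set d := Module.finrank ℂ W' with hd
  let b : Module.Basis (Fin d) ℂ W' := Module.finBasis ℂ W'
  let C : Fin n → (Fin d → ℂ) := fun j i => (b i : Fin n → ℂ) j
  let M : Matrix (Fin d) (Fin n) ℂ := Matrix.of fun i j => (b i : Fin n → ℂ) j
  have hMt_inj : Function.Injective (Mᵀ.mulVecLin) := by
    rw [← LinearMap.ker_eq_bot, LinearMap.ker_eq_bot']
    intro a ha
    have h0 : (∑ i, a i • b i) = 0 := by
      apply Subtype.ext
      funext j
      have := congrFun ha j
      simpa [Matrix.mulVecLin_apply, Matrix.mulVec, Matrix.vecMul, dotProduct, M,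
        mul_comm] using this
    have hli := b.linearIndependent
    exact funext (Fintype.linearIndependent_iff.mp hli a h0)
  have hrank : M.rank = d := by
    have h1 : Mᵀ.rank = d := by
      have := LinearMap.finrank_range_of_inj hMt_inj
      simpa [Matrix.rank, Module.finrank_fintype_fun_eq_card] using this
    rw [← Matrix.rank_transpose]; exact h1
  have hspan : Module.finrank ℂ (Submodule.span ℂ (Set.range C)) = d := by
    have : Set.range C = Set.range Mᵀ := by
      ext x; constructor
      · rintro ⟨j, rfl⟩; exact ⟨j, rfl⟩
      · rintro ⟨j, rfl⟩; exact ⟨j, rfl⟩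
    rw [this]
    show Module.finrank ℂ (Submodule.span ℂ (Set.range (Matrix.col M))) = d
    rw [← Matrix.range_mulVecLin]
    simpa [Matrix.rank] using hrank
  obtain ⟨s, hs_sub, hs_span, hs_li⟩ := exists_linearIndependent ℂ (Set.range C)
  have hs_fin : s.Finite := hs_li.setFinite
  haveI : Fintype ↑s := hs_fin.fintype
  have hcard : r ≤ s.toFinset.card := by
    have h1 : Module.finrank ℂ (Submodule.span ℂ s) = d := by rw [hs_span, hspan]
    have hle := finrank_span_le_card (R := ℂ) s
    omega
  obtain ⟨F, hFsub, hFcard⟩ := Finset.exists_subset_card_eq hcard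
  let e : Fin r ≃ ↑F := (Finset.equivFinOfCardEq hFcard).symm
  have hmem : ∀ x : ↑F, ∃ j, C j = (x : Fin d → ℂ) := by
    intro x
    have : (x : Fin d → ℂ) ∈ s := by
      have := hFsub x.2; simpa using this
    exact hs_sub this
  choose gg hgg using hmem
  let g : Fin r → Fin n := fun t => gg (e t)
  have hCg : ∀ t, C (g t) = ((e t : ↑F) : Fin d → ℂ) := fun t => hgg (e t)
  have hginj : Function.Injective g := by
    intro t1 t2 ht
    have : ((e t1 : ↑F) : Fin d → ℂ) = ((e t2 : ↑F) : Fin d → ℂ) := by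
      rw [← hCg, ← hCg, ht]
    exact e.injective (Subtype.ext this)
  have hli : LinearIndependent ℂ (fun t => C (g t)) := by
    have h1 : LinearIndependent ℂ (fun x : ↑(↑F : Set (Fin d → ℂ)) => (x : Fin d → ℂ)) := by
      show LinearIndepOn ℂ id (↑F : Set (Fin d → ℂ))
      apply LinearIndepOn.mono (v := id) hs_li
      intro x hx
      have := hFsub (by simpa using hx : x ∈ F)
      simpa using this
    have h2 := h1.comp (fun t => ⟨(e t : ↑F), by simp⟩)
      (by intro t1 t2 h12; exact e.injective (Subtype.ext (by simpa using congrArg Subtype.val h12)))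
    convert h2 using 1
    funext t; rw [hCg]; rfl
  refine ⟨g, hginj, ?_⟩
  intro c
  let N : Matrix (Fin r) (Fin d) ℂ := Matrix.of fun t i => C (g t) i
  have hNt_inj : Function.Injective (Nᵀ.mulVecLin) := by
    rw [← LinearMap.ker_eq_bot, LinearMap.ker_eq_bot']
    intro a ha
    have h0 : ∑ t, a t • C (g t) = 0 := by
      funext i
      have := congrFun ha i
      simpa [Matrix.mulVecLin_apply, Matrix.mulVec, Matrix.vecMul, dotProduct, N,
        mul_comm, Finset.sum_apply] using this
    exact funext (Fintype.linearIndependent_iff.mp hli a h0)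
  have hNrank : N.rank = r := by
    have h1 : Nᵀ.rank = r := by
      have := LinearMap.finrank_range_of_inj hNt_inj
      simpa [Matrix.rank, Module.finrank_fintype_fun_eq_card] using this
    rw [← Matrix.rank_transpose]; exact h1
  have hsurj : Function.Surjective (N.mulVecLin) := by
    rw [← LinearMap.range_eq_top]
    apply Submodule.eq_top_of_finrank_eq
    rw [Module.finrank_fintype_fun_eq_card]
    simpa [Matrix.rank] using hNrank
  obtain ⟨a, ha⟩ := hsurj c
  refine ⟨(↑(∑ i, a i • b i) : Fin n → ℂ), (∑ i, a i • b i).2, ?_⟩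
  intro t
  have := congrFun ha t
  simp only [Matrix.mulVecLin_apply, Matrix.mulVec, dotProduct] at this
  rw [← this]
  simp [N, C, Finset.sum_apply, mul_comm]

/-- The frame vectors. -/
noncomputable def uvec {k : ℕ} (t : Fin k × Fin k) : Fin k → ℂ :=
  fun i => (if i = t.1 then 1 else 0) + (if t.1 ≠ t.2 ∧ i = t.2 then 1 + Complex.I else 0)

noncomputable def Umat (k : ℕ) : Matrix (Fin k × Fin k) (Fin k) ℂ :=
  Matrix.of fun t i => uvec t i

noncomputable def Theta (k : ℕ) : (Fin k × Fin k → ℂ) →ₗ[ℂ] Matrix (Fin k) (Fin k) ℂ where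
  toFun d := (Umat k)ᴴ * Matrix.diagonal d * Umat k
  map_add' d e := by
    have h : Matrix.diagonal (d + e) = Matrix.diagonal d + Matrix.diagonal e :=
      (Matrix.diagonal_add d e).symm
    simp only [h, Matrix.mul_add, Matrix.add_mul]
  map_smul' c d := by
    have h : Matrix.diagonal (c • d) = c • Matrix.diagonal d := Matrix.diagonal_smul c d
    simp only [h, Matrix.mul_smul, Matrix.smul_mul, RingHom.id_apply]

lemma entry_formula {k : ℕ} (d : Fin k × Fin k → ℂ) (i l : Fin k) :
    Theta k d i l = ∑ t, d t * (star (uvec t i) * uvec t l) := by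
  show ((Umat k)ᴴ * Matrix.diagonal d * Umat k) i l = _
  rw [Matrix.mul_apply]
  congr 1
  funext t
  rw [Matrix.mul_diagonal]
  simp [Umat, Matrix.conjTranspose_apply]
  ring

lemma sum_single_mul {k : ℕ} (s : Fin k × Fin k) (c : ℂ) (F : Fin k × Fin k → ℂ) :
    ∑ t, (Pi.single s c : Fin k × Fin k → ℂ) t * F t = c * F s := by
  rw [Finset.sum_eq_single s]
  · simp
  · intro t _ ht; simp [Pi.single_apply, ht]
  · simp

lemma std_apply {k : ℕ} (p q i l : Fin k) :
    Matrix.single p q (1:ℂ) i l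
      = (if i = p then 1 else 0) * (if l = q then 1 else 0) := by
  simp only [Matrix.single, Matrix.of_apply]
  by_cases h1 : i = p <;> by_cases h2 : l = q <;> simp [h1, h2] <;> aesop

lemma theta_stdBasis {k : ℕ} (p q : Fin k) :
    ∃ d : Fin k × Fin k → ℂ, Theta k d = Matrix.single p q 1 := by
  classical
  by_cases hpq : p = q
  · subst hpq
    refine ⟨Pi.single (p, p) 1, ?_⟩
    ext i l
    rw [entry_formula, sum_single_mul, std_apply]
    simp only [uvec, ne_eq, not_true_eq_false, false_and, if_false, add_zero, one_mul]
    by_cases hi : i = p <;> by_cases hl : l = p <;> simp [hi, hl]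
  · refine ⟨Pi.single (p,q) ((1 - Complex.I)/4) + Pi.single (q,p) ((1 + Complex.I)/4)
      + Pi.single (p,p) (-(3 + Complex.I)/4) + Pi.single (q,q) (-(3 - Complex.I)/4), ?_⟩
    ext i l
    rw [entry_formula]
    simp only [Pi.add_apply, add_mul, Finset.sum_add_distrib, sum_single_mul]
    rw [std_apply]
    have hqp : q ≠ p := fun h => hpq h.symm
    have huv : ∀ (a b : Fin k), a ≠ b → ∀ j, uvec (a,b) j
        = (if j = a then 1 else 0) + (if j = b then 1 + Complex.I else 0) := by
      intro a b hab j; simp [uvec, hab]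
    have huvd : ∀ (a : Fin k) (j : Fin k), uvec (a,a) j = (if j = a then 1 else 0) := by
      intro a j; simp [uvec]
    rw [huv p q hpq, huv p q hpq, huv q p hqp, huv q p hqp, huvd, huvd, huvd, huvd]
    by_cases hi : i = p <;> by_cases hi' : i = q <;> by_cases hl : l = p <;> by_cases hl' : l = q
    all_goals try (exact absurd (hi.symm.trans hi') hpq)
    all_goals try (exact absurd (hl.symm.trans hl') hpq)
    all_goals simp [hi, hi', hl, hl', hpq, hqp, Complex.star_def, map_add,
      _root_.map_one, Complex.conj_I]
    all_goals ring_nf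
    all_goals simp [show Complex.I ^ 3 = -Complex.I by
      rw [(by norm_num : 3 = 2 + 1), pow_succ, Complex.I_sq]; ring, Complex.I_sq]
    all_goals ring_nf

lemma surjTheta {k : ℕ} : Function.Surjective (Theta k) := by
  classical
  intro M
  choose D hD using fun p q : Fin k => theta_stdBasis p q
  refine ⟨∑ p, ∑ q, M p q • D p q, ?_⟩
  simp only [map_sum, _root_.map_smul, hD, Matrix.smul_single, smul_eq_mul, mul_one]
  exact (Matrix.matrix_eq_sum_single M).symm

/-- the two-sided multiplication linear map -/
noncomputable def sw {a b c d : Type*} [Fintype b] [Fintype c]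
    (B : Matrix a b ℂ) (C : Matrix c d ℂ) :
    Matrix b c ℂ →ₗ[ℂ] Matrix a d ℂ where
  toFun A := B * A * C
  map_add' A A' := by simp only [Matrix.mul_add, Matrix.add_mul]
  map_smul' r A := by simp only [Matrix.mul_smul, Matrix.smul_mul, RingHom.id_apply]

noncomputable def Wmat (n k : ℕ) (g : Fin k × Fin k → Fin n) : Matrix (Fin n) (Fin k) ℂ :=
  Matrix.of fun j i => ∑ t, if j = g t then uvec t i else 0

lemma Wrow {n k : ℕ} (g : Fin k × Fin k → Fin n) (hg : Function.Injective g)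
    (t : Fin k × Fin k) (i : Fin k) : Wmat n k g (g t) i = uvec t i := by
  simp [Wmat, hg.eq_iff]

lemma W_eq {n k : ℕ} (g : Fin k × Fin k → Fin n) :
    Wmat n k g
      = (Matrix.of fun j t => if j = g t then (1:ℂ) else 0) * Umat k := by
  ext j i
  simp [Wmat, Umat, Matrix.mul_apply, ite_mul]

lemma W_sandwich {n k : ℕ} (g : Fin k × Fin k → Fin n) (hg : Function.Injective g)
    (A : Matrix (Fin n) (Fin n) ℂ) (hA : A.IsDiag) :
    (Wmat n k g)ᴴ * A * Wmat n k g = Theta k (fun t => A (g t) (g t)) := by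
  classical
  set E : Matrix (Fin n) (Fin k × Fin k) ℂ :=
    Matrix.of fun j t => if j = g t then (1:ℂ) else 0 with hE
  have hEAE : Eᴴ * A * E = Matrix.diagonal (fun t => A (g t) (g t)) := by
    ext t t'
    have h1 : ∀ j', (Eᴴ * A) t j' = A (g t) j' := by
      intro j'
      simp [Matrix.mul_apply, E, Matrix.conjTranspose_apply, apply_ite star, ite_mul]
    rw [Matrix.mul_apply]
    simp only [h1]
    by_cases htt : t = t'
    · subst htt
      simp [E, mul_ite, Matrix.diagonal_apply_eq]
    · have : A (g t) (g t') = 0 := hA (fun h => htt (hg h))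
      simp [E, mul_ite, Matrix.diagonal_apply_ne _ htt, this]
  rw [W_eq g, ← hE]
  calc (E * Umat k)ᴴ * A * (E * Umat k)
      = (Umat k)ᴴ * (Eᴴ * A * E) * Umat k := by
        simp only [Matrix.conjTranspose_mul, Matrix.mul_assoc]
    _ = Theta k (fun t => A (g t) (g t)) := by rw [hEAE]; rfl

lemma W_mulVec_inj {n k : ℕ} (g : Fin k × Fin k → Fin n) (hg : Function.Injective g) :
    Function.Injective ((Wmat n k g).mulVecLin) := by
  rw [← LinearMap.ker_eq_bot, LinearMap.ker_eq_bot']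
  intro x hx
  funext a
  have h := congrFun hx (g (a, a))
  simp only [Matrix.mulVecLin_apply, Matrix.mulVec, dotProduct, Pi.zero_apply] at h
  have hrow : ∀ i, Wmat n k g (g (a,a)) i = if i = a then 1 else 0 := by
    intro i; rw [Wrow g hg]; simp [uvec]
  simp only [hrow, ite_mul, one_mul, zero_mul, Finset.sum_ite_eq', Finset.mem_univ,
    if_true] at h
  simpa using h

end QCliqueAux

open QCliqueAux in
/-- An operator system contained in the diagonal matrices with dimension at
least `k² + k - 1` has a quantum `k`-clique. -/
theorem diag_system_quantum_clique (n k : ℕ)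
    (V : Submodule ℂ (Matrix (Fin n) (Fin n) ℂ)) (hos : IsOperatorSystem V)
    (hsub : V ≤ diagMatrices n)
    (hdim : k ^ 2 + k - 1 ≤ Module.finrank ℂ V) :
    ∃ P : Matrix (Fin n) (Fin n) ℂ, P * P = P ∧ Pᴴ = P ∧ P.rank = k ∧
      Module.finrank ℂ (V.map (compress P)) = k ^ 2 := by
  classical
  open ComplexOrder in
  -- the diagonal restriction subspace
  let dmap : Matrix (Fin n) (Fin n) ℂ →ₗ[ℂ] (Fin n → ℂ) :=
    { toFun := Matrix.diag, map_add' := fun _ _ => rfl, map_smul' := fun _ _ => rfl }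
  have hdmap_inj : Function.Injective (dmap.comp V.subtype) := by
    intro A B h
    apply Subtype.ext
    have hA : Matrix.diagonal (Matrix.diag (A:Matrix (Fin n) (Fin n) ℂ)) = (A:Matrix (Fin n) (Fin n) ℂ) :=
      (hsub A.2).diagonal_diag
    have hB : Matrix.diagonal (Matrix.diag (B:Matrix (Fin n) (Fin n) ℂ)) = (B:Matrix (Fin n) (Fin n) ℂ) :=
      (hsub B.2).diagonal_diag
    have h' : Matrix.diag (A : Matrix (Fin n) (Fin n) ℂ)
        = Matrix.diag (B : Matrix (Fin n) (Fin n) ℂ) := h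
    rw [← hA, ← hB, h']
  have hW'fr : Module.finrank ℂ (V.map dmap) = Module.finrank ℂ V := by
    have h1 : V.map dmap = LinearMap.range (dmap.comp V.subtype) := by
      rw [LinearMap.range_comp, Submodule.range_subtype]
    rw [h1, LinearMap.finrank_range_of_inj hdmap_inj]
  have hkk : k * k ≤ Module.finrank ℂ (V.map dmap) := by
    rw [hW'fr]
    rcases Nat.eq_zero_or_pos k with h0 | h1
    · subst h0; simpa using Nat.zero_le _
    · have h2 : k ^ 2 + k - 1 = k * k + (k - 1) := by
        rw [pow_two, Nat.add_sub_assoc h1]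
      rw [h2] at hdim
      exact le_trans (Nat.le_add_right _ _) hdim
  obtain ⟨g0, hg0inj, hg0surj⟩ := exists_coords (V.map dmap) hkk
  set e : Fin k × Fin k ≃ Fin (k * k) := finProdFinEquiv
  set g : Fin k × Fin k → Fin n := fun t => g0 (e t) with hgdef
  have hginj : Function.Injective g := fun a b h => e.injective (hg0inj h)
  -- surjectivity of the diagonal restriction to the selected coordinates
  have hgsurj : ∀ c : Fin k × Fin k → ℂ, ∃ A ∈ V,
      ∀ t, (A : Matrix (Fin n) (Fin n) ℂ) (g t) (g t) = c t := by
    intro c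
    obtain ⟨w, hwmem, hw⟩ := hg0surj (fun s => c (e.symm s))
    obtain ⟨A, hAV, hAw⟩ := Submodule.mem_map.mp hwmem
    refine ⟨A, hAV, fun t => ?_⟩
    have := hw (e t)
    rw [Equiv.symm_apply_apply] at this
    rw [← this, ← hAw]
    rfl
  set W : Matrix (Fin n) (Fin k) ℂ := Wmat n k g with hWdef
  set G0 : Matrix (Fin k) (Fin k) ℂ := Wᴴ * W with hG0
  have hWinj : Function.Injective (W.mulVecLin) := W_mulVec_inj g hginj
  -- G0 is invertible
  have hdet : IsUnit G0.det := by
    rw [isUnit_iff_ne_zero]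
    intro h0
    obtain ⟨v, hv0, hv⟩ := (Matrix.exists_mulVec_eq_zero_iff).mpr h0
    have h1 : star (W.mulVec v) ⬝ᵥ (W.mulVec v) = 0 := by
      have h2 : star v ⬝ᵥ (G0.mulVec v) = 0 := by rw [hv]; simp
      rw [hG0, ← Matrix.mulVec_mulVec, Matrix.dotProduct_mulVec, ← Matrix.star_mulVec] at h2
      exact h2
    have h3 : W.mulVec v = 0 := dotProduct_star_self_eq_zero.mp h1
    apply hv0
    apply hWinj
    simpa [Matrix.mulVecLin_apply] using h3
  have hinv1 : G0⁻¹ * G0 = 1 := Matrix.nonsing_inv_mul _ hdet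
  have hinv2 : G0 * G0⁻¹ = 1 := Matrix.mul_nonsing_inv _ hdet
  set P : Matrix (Fin n) (Fin n) ℂ := W * G0⁻¹ * Wᴴ with hPdef
  -- projection
  have hP2 : P * P = P := by
    calc P * P = W * G0⁻¹ * (G0 * (G0⁻¹ * Wᴴ)) := by
          rw [hPdef, hG0]; simp only [Matrix.mul_assoc]
      _ = P := by rw [← Matrix.mul_assoc G0, hinv2, Matrix.one_mul, hPdef, Matrix.mul_assoc]
  have hPH : Pᴴ = P := by
    have hG0H : G0ᴴ = G0 := by rw [hG0, Matrix.conjTranspose_mul, Matrix.conjTranspose_conjTranspose]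
    rw [hPdef]
    simp only [Matrix.conjTranspose_mul, Matrix.conjTranspose_conjTranspose,
      Matrix.conjTranspose_nonsing_inv, hG0H, Matrix.mul_assoc]
  -- rank
  have hWrank : W.rank = k := by
    rw [Matrix.rank, LinearMap.finrank_range_of_inj hWinj,
      Module.finrank_fintype_fun_eq_card, Fintype.card_fin]
  have hrankP : P.rank = k := by
    apply le_antisymm
    · calc P.rank ≤ Wᴴ.rank := by rw [hPdef]; exact Matrix.rank_mul_le_right _ _
        _ = k := by rw [Matrix.rank_conjTranspose, hWrank]
    · have hPW : P * W = W := by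
        calc P * W = W * G0⁻¹ * G0 := by rw [hPdef, hG0]; simp only [Matrix.mul_assoc]
          _ = W * (G0⁻¹ * G0) := by rw [Matrix.mul_assoc]
          _ = W := by rw [hinv1, Matrix.mul_one]
      calc k = (P * W).rank := by rw [hPW, hWrank]
        _ ≤ P.rank := Matrix.rank_mul_le_left _ _
  -- the two sandwich maps
  set φ : Matrix (Fin n) (Fin n) ℂ →ₗ[ℂ] Matrix (Fin k) (Fin k) ℂ := sw Wᴴ W with hφ
  set ψ : Matrix (Fin k) (Fin k) ℂ →ₗ[ℂ] Matrix (Fin n) (Fin n) ℂ :=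
    sw (W * G0⁻¹) (G0⁻¹ * Wᴴ) with hψ
  have hcomp : compress P = ψ.comp φ := by
    apply LinearMap.ext
    intro A
    show P * A * P = (W * G0⁻¹) * (Wᴴ * A * W) * (G0⁻¹ * Wᴴ)
    rw [hPdef]; simp only [Matrix.mul_assoc]
  have hψinj : Function.Injective ψ := by
    have hleft : ∀ M, φ (ψ M) = M := by
      intro M
      show Wᴴ * ((W * G0⁻¹) * M * (G0⁻¹ * Wᴴ)) * W = M
      calc Wᴴ * ((W * G0⁻¹) * M * (G0⁻¹ * Wᴴ)) * W
          = G0 * G0⁻¹ * M * (G0⁻¹ * G0) := by rw [hG0]; simp only [Matrix.mul_assoc]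
        _ = M := by rw [hinv2, Matrix.one_mul, hinv1, Matrix.mul_one]
    exact Function.LeftInverse.injective hleft
  have hmap_top : V.map φ = ⊤ := by
    rw [eq_top_iff]
    rintro M -
    obtain ⟨dd, hdd⟩ := surjTheta (k := k) M
    obtain ⟨A, hAV, hAc⟩ := hgsurj dd
    refine Submodule.mem_map.mpr ⟨A, hAV, ?_⟩
    show Wᴴ * A * W = M
    rw [hWdef, W_sandwich g hginj A (hsub hAV)]
    rw [show (fun t => (A : Matrix (Fin n) (Fin n) ℂ) (g t) (g t)) = dd from funext hAc, hdd]
  refine ⟨P, hP2, hPH, hrankP, ?_⟩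
  have hfinal : V.map (compress P) = Submodule.map ψ ⊤ := by
    rw [hcomp, Submodule.map_comp, hmap_top]
  rw [hfinal]
  rw [← LinearEquiv.finrank_eq (Submodule.equivMapOfInjective ψ hψinj ⊤)]
  rw [finrank_top, Module.finrank_matrix]
  simp [pow_two]
end

section
/- Let v_1, …, v_r be vectors in ℂ^s. Then there exist vectors w_1, …, w_r ∈ ℂ^{r−1} such that the vectors v_i ⊕ w_i ∈ ℂ^{s+r−1} are pairwise orthogonal and all have the same norm. -/
open Finset in
open scoped ComplexOrder in
private lemma pad_aux (s n : ℕ) (v : Fin (n + 1) → EuclideanSpace ℂ (Fin s)) :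
    ∃ w : Fin (n + 1) → EuclideanSpace ℂ (Fin n),
      ∃ c : ℝ, ∀ i j : Fin (n + 1),
        inner (𝕜 := ℂ)
          ((WithLp.equiv 2 (Fin (s + n) → ℂ)).symm (Fin.append (v i) (w i)))
          ((WithLp.equiv 2 (Fin (s + n) → ℂ)).symm (Fin.append (v j) (w j))) =
          (if i = j then (c : ℂ) else 0) := by
  classical
  set G : Matrix (Fin (n + 1)) (Fin (n + 1)) ℂ :=
    Matrix.of fun i j => ∑ k, (starRingEnd ℂ) (v i k) * v j k with hGdef
  have hpsd : G.PosSemidef := by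
    have hfac : G = (Matrix.of fun (k : Fin s) (i : Fin (n + 1)) => v i k).conjTranspose *
        (Matrix.of fun (k : Fin s) (i : Fin (n + 1)) => v i k) := by
      ext i j
      simp [Matrix.mul_apply, Matrix.conjTranspose_apply, hGdef]
    rw [hfac]
    exact Matrix.posSemidef_conjTranspose_mul_self _
  have hG : G.IsHermitian := hpsd.isHermitian
  set μ := hG.eigenvalues with hμ
  obtain ⟨t₀, _, ht₀⟩ := Finset.exists_max_image Finset.univ μ ⟨0, Finset.mem_univ 0⟩
  set c := μ t₀ with hc
  set U : Matrix (Fin (n + 1)) (Fin (n + 1)) ℂ := ((hG.eigenvectorUnitary : Matrix.unitaryGroup (Fin (n + 1)) ℂ) : Matrix (Fin (n + 1)) (Fin (n + 1)) ℂ)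
    with hU
  have hspec : ∀ i j, G i j = ∑ t, U i t * (μ t : ℂ) * (starRingEnd ℂ) (U j t) := by
    intro i j
    conv_lhs => rw [hG.spectral_theorem, Unitary.conjStarAlgAut_apply]
    rw [Matrix.mul_apply]
    refine Finset.sum_congr rfl fun t _ => ?_
    rw [Matrix.mul_diagonal]
    simp [hU, hμ, Matrix.star_apply, mul_comm]
  have hunit : ∀ i j, ∑ t, U i t * (starRingEnd ℂ) (U j t) = if i = j then 1 else 0 := by
    intro i j
    have h1 : U * star U = 1 := (Matrix.mem_unitaryGroup_iff).mp hG.eigenvectorUnitary.2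
    simpa [Matrix.mul_apply, Matrix.one_apply, Matrix.star_apply] using
      congrFun (congrFun h1 i) j
  refine ⟨fun i => (WithLp.equiv 2 (Fin n → ℂ)).symm fun k =>
      (Real.sqrt (c - μ (t₀.succAbove k)) : ℂ) * (starRingEnd ℂ) (U i (t₀.succAbove k)),
    c, fun i j => ?_⟩
  rw [PiLp.inner_apply]
  simp only [RCLike.inner_apply', WithLp.equiv_symm_apply, PiLp.toLp_apply]
  rw [Fin.sum_univ_add]
  simp only [Fin.append_left, Fin.append_right, WithLp.equiv_symm_apply, PiLp.toLp_apply]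
  have hfirst : ∑ k : Fin s, (starRingEnd ℂ) (v i k) * v j k = G i j := rfl
  have hterm : ∀ t : Fin (n + 1),
      (starRingEnd ℂ) ((Real.sqrt (c - μ t) : ℂ) * (starRingEnd ℂ) (U i t)) *
        ((Real.sqrt (c - μ t) : ℂ) * (starRingEnd ℂ) (U j t)) =
      ((c : ℂ) - (μ t : ℂ)) * (U i t * (starRingEnd ℂ) (U j t)) := by
    intro t
    have hnn : (0:ℝ) ≤ c - μ t := sub_nonneg.mpr (ht₀ t (Finset.mem_univ t))
    have : ((Real.sqrt (c - μ t) : ℂ)) * (Real.sqrt (c - μ t) : ℂ) = ((c - μ t : ℝ) : ℂ) := by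
      rw [← Complex.ofReal_mul, Real.mul_self_sqrt hnn]
    push_cast [map_mul, Complex.conj_ofReal, RingHom.id_apply, starRingEnd_self_apply] at *
    ring_nf
    rw [show ((Real.sqrt (c - μ t) : ℂ)) ^ 2 = (c : ℂ) - (μ t : ℂ) by
      rw [sq, ← Complex.ofReal_mul, Real.mul_self_sqrt hnn]; push_cast; ring]
    ring
  have hsecond : ∑ k : Fin n,
      (starRingEnd ℂ) ((Real.sqrt (c - μ (t₀.succAbove k)) : ℂ) *
          (starRingEnd ℂ) (U i (t₀.succAbove k))) *
        ((Real.sqrt (c - μ (t₀.succAbove k)) : ℂ) * (starRingEnd ℂ) (U j (t₀.succAbove k))) =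
      ∑ t : Fin (n + 1), ((c : ℂ) - (μ t : ℂ)) * (U i t * (starRingEnd ℂ) (U j t)) := by
    rw [Fin.sum_univ_succAbove
      (fun t => ((c : ℂ) - (μ t : ℂ)) * (U i t * (starRingEnd ℂ) (U j t))) t₀]
    rw [← hc, sub_self, zero_mul, zero_add]
    exact Finset.sum_congr rfl fun k _ => hterm _
  rw [hfirst, hsecond]
  have : ∑ t : Fin (n + 1), ((c : ℂ) - (μ t : ℂ)) * (U i t * (starRingEnd ℂ) (U j t)) =
      (c : ℂ) * (∑ t, U i t * (starRingEnd ℂ) (U j t)) -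
        ∑ t, U i t * (μ t : ℂ) * (starRingEnd ℂ) (U j t) := by
    rw [Finset.mul_sum, ← Finset.sum_sub_distrib]
    exact Finset.sum_congr rfl fun t _ => by ring
  rw [this, hunit, hspec]
  split <;> ring

/-- Given vectors `v₁, …, vᵣ` in `ℂˢ`, there are vectors `w₁, …, wᵣ` in
`ℂ^{r-1}` such that the concatenations `vᵢ ⊕ wᵢ ∈ ℂ^{s+r-1}` are pairwise
orthogonal and all have the same norm. -/
theorem pad_to_orthogonal_equal_norm (s r : ℕ)
    (v : Fin r → EuclideanSpace ℂ (Fin s)) :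
    ∃ w : Fin r → EuclideanSpace ℂ (Fin (r - 1)),
      (∀ i j : Fin r, i ≠ j →
        inner (𝕜 := ℂ)
          ((WithLp.equiv 2 (Fin (s + (r - 1)) → ℂ)).symm (Fin.append (v i) (w i)))
          ((WithLp.equiv 2 (Fin (s + (r - 1)) → ℂ)).symm (Fin.append (v j) (w j))) = 0) ∧
      (∀ i j : Fin r,
        ‖(WithLp.equiv 2 (Fin (s + (r - 1)) → ℂ)).symm (Fin.append (v i) (w i))‖ =
        ‖(WithLp.equiv 2 (Fin (s + (r - 1)) → ℂ)).symm (Fin.append (v j) (w j))‖) := by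
  match r, v with
  | 0, v => exact ⟨fun i => 0, fun i j _ => i.elim0, fun i j => i.elim0⟩
  | n + 1, v =>
    obtain ⟨w, c, h⟩ := pad_aux s n v
    refine ⟨w, fun i j hij => ?_, fun i j => ?_⟩
    · show inner (𝕜 := ℂ)
          ((WithLp.equiv 2 (Fin (s + n) → ℂ)).symm (Fin.append (v i) (w i)))
          ((WithLp.equiv 2 (Fin (s + n) → ℂ)).symm (Fin.append (v j) (w j))) = 0
      rw [h i j, if_neg hij]
    · show ‖(WithLp.equiv 2 (Fin (s + n) → ℂ)).symm (Fin.append (v i) (w i))‖ =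
          ‖(WithLp.equiv 2 (Fin (s + n) → ℂ)).symm (Fin.append (v j) (w j))‖
      rw [norm_eq_sqrt_re_inner (𝕜 := ℂ), norm_eq_sqrt_re_inner (𝕜 := ℂ), h i i, h j j,
        if_pos rfl, if_pos rfl]
end

section
/- Let n = k⁴ + k³ + k − 1 and let 𝒱 ⊆ M_n(ℂ) be an operator system. Suppose 𝒱 contains matrices A_1, …, A_{k⁴+k³} such that for each i one has ⟨A_i e_i, e_{i+1}⟩ ≠ 0, and ⟨A_i e_r, e_s⟩ = 0 whenever max{r,s} > i+1 and r ≠ s. Then 𝒱 has a quantum k-clique. -/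
open Matrix

namespace QRC

open BigOperators Finset Complex




variable {k : ℕ}

abbrev R (k : ℕ) := Fin k × Fin k
abbrev C (k : ℕ) := R k × Bool

def iR (u : R k) : ℕ := u.1.val * k + u.2.val

lemma iR_lt (u : R k) : iR u < k * k := by
  rcases u with ⟨a, b⟩
  have hb : b.val < k := b.isLt
  have h2 : (a.val + 1) * k ≤ k * k := Nat.mul_le_mul_right k a.isLt
  have h3 : (a.val + 1) * k = a.val * k + k := by ring
  simp only [iR]
  omega

lemma iR_inj : Function.Injective (iR (k := k)) := by
  rintro ⟨a, b⟩ ⟨c, d⟩ h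
  simp only [iR] at h
  have hb := b.isLt; have hd := d.isLt
  have h1 : k * a.val + b.val = k * c.val + d.val := by
    rw [Nat.mul_comm k a.val, Nat.mul_comm k c.val]; exact h
  have hbmod : (k * a.val + b.val) % k = b.val := by
    rw [Nat.mul_add_mod, Nat.mod_eq_of_lt hb]
  have hdmod : (k * c.val + d.val) % k = d.val := by
    rw [Nat.mul_add_mod, Nat.mod_eq_of_lt hd]
  have hbd : b.val = d.val := by rw [← hbmod, ← hdmod, h1]
  have hac : a.val = c.val := by
    have hkpos : 0 < k := by omega
    exact Nat.eq_of_mul_eq_mul_left hkpos (m := a.val) (k := c.val) (by omega)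
  simp [Prod.ext_iff, Fin.ext_iff, hbd, hac]

def cN (c : C k) : ℕ := 2 * iR c.1 + (if c.2 then 1 else 0)

lemma cN_lt (c : C k) : cN c < 2 * (k * k) := by
  rcases c with ⟨u, b⟩
  have h := iR_lt u
  cases b <;> simp only [cN, Prod.fst, if_true, if_false, Bool.false_eq_true] <;> omega

lemma cN_inj : Function.Injective (cN (k := k)) := by
  rintro ⟨u, b⟩ ⟨u', b'⟩ h
  cases b <;> cases b' <;>
    simp only [cN, if_true, if_false, Bool.false_eq_true] at h
  · have hu : u = u' := iR_inj (show iR u = iR u' by omega)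
    rw [hu]
  · exfalso; omega
  · exfalso; omega
  · have hu : u = u' := iR_inj (show iR u = iR u' by omega)
    rw [hu]

def lab (c : C k) : Fin k := if c.2 then c.1.1 else c.1.2

def hi (p : R k) : C k := (p, true)
def lo (p : R k) : C k := (p, false)


lemma comb {k : ℕ} (σ : Equiv.Perm (R k)) (F : R k → C k × C k)
    (hL : ∀ q, lab (F q).1 = q.1 ∧ lab (F q).2 = q.2)
    (hN : ∀ q, (F q).1 ≠ (F q).2 →
      max (cN (F q).1) (cN (F q).2) ≤ 2 * iR (σ q) + 1)
    (hB : ∀ c : C k,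
      (∑ q : R k, ((if (F q).2 = c then (1:ℤ) else 0) - (if (F q).1 = c then 1 else 0)))
        + (if c.2 then 1 else -1) = 0) :
    ∀ q, σ q = q ∧ F q = (hi q, lo q) := by
  suffices h : ∀ j : ℕ, ∀ q, k*k - j ≤ iR (σ q) → σ q = q ∧ F q = (hi q, lo q) by
    intro q; exact h (k*k) q (by omega)
  intro j
  induction j with
  | zero => intro q h; exact absurd (iR_lt (σ q)) (by omega)
  | succ j IH =>
    intro q₀ hq₀
    by_cases hcase : k*k - j ≤ iR (σ q₀)
    · exact IH q₀ hcase
    set m := iR (σ q₀) with hm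
    have IH' : ∀ q, m + 1 ≤ iR (σ q) → σ q = q ∧ F q = (hi q, lo q) := by
      intro q h; exact IH q (by omega)
    set p₀ := σ q₀ with hp₀
    have huniq : ∀ q, iR (σ q) = m → q = q₀ := by
      intro q h
      exact σ.injective (iR_inj (h.trans hm))
    -- generic vanishing lemma for both steps
    have hvanish : ∀ (c : C k), (∀ q, m + 1 ≤ iR (σ q) → σ q = q ∧ F q = (hi q, lo q)) →
        2*m ≤ cN c → (∀ q', (m+1 ≤ iR q') → hi q' ≠ c ∧ lo q' ≠ c) →
        ∀ q ∈ Finset.univ, q ≠ q₀ →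
        ((if (F q).2 = c then (1:ℤ) else 0) - (if (F q).1 = c then 1 else 0)) = 0 := by
      intro c _ hc hno q _ hne
      by_cases hdiag : (F q).1 = (F q).2
      · rw [hdiag]; ring
      · have hbound := hN q hdiag
        have hge : ∀ (hEq : (F q).1 = c ∨ (F q).2 = c), False := by
          rintro (hEq | hEq)
          all_goals {
            have hle : cN c ≤ 2 * iR (σ q) + 1 := by
              rw [← hEq]
              first
                | exact le_trans (le_max_left _ _) hbound
                | exact le_trans (le_max_right _ _) hbound
            have hgem : m ≤ iR (σ q) := by omega
            rcases Nat.eq_or_lt_of_le hgem with heq | hlt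
            · exact hne (huniq q heq.symm)
            · obtain ⟨hσ, hF⟩ := IH' q (by omega)
              have hq' := hno q (by rw [← hσ]; omega)
              rw [hF] at hEq
              simp only [Prod.fst, Prod.snd] at hEq
              first
                | exact hq'.1 hEq
                | exact hq'.2 hEq }
        rw [if_neg (fun h => hge (Or.inr h)), if_neg (fun h => hge (Or.inl h))]
        ring
    -- Step A at c★ = hi p₀
    have hstepA : (F q₀).1 = hi p₀ ∧ (F q₀).2 ≠ hi p₀ := by
      have hb := hB (hi p₀)
      have hno : ∀ q', (m+1 ≤ iR q') → hi q' ≠ hi p₀ ∧ lo q' ≠ hi p₀ := by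
        intro q' hq'
        constructor
        · intro hEq
          have : q' = p₀ := congrArg Prod.fst hEq
          rw [this] at hq'; omega
        · intro hEq
          have := congrArg Prod.snd hEq
          simp [hi, lo] at this
      have hsum : (∑ q : R k, ((if (F q).2 = hi p₀ then (1:ℤ) else 0) - (if (F q).1 = hi p₀ then 1 else 0)))
          = ((if (F q₀).2 = hi p₀ then (1:ℤ) else 0) - (if (F q₀).1 = hi p₀ then 1 else 0)) :=
        Finset.sum_eq_single q₀
          (hvanish (hi p₀) IH' (by simp [cN, hi]; omega) hno)
          (fun h => absurd (Finset.mem_univ q₀) h)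
      rw [hsum] at hb
      have hb2 : (if (hi p₀).2 then (1:ℤ) else -1) = 1 := rfl
      rw [hb2] at hb
      by_cases h2 : (F q₀).2 = hi p₀
      · rw [if_pos h2] at hb
        by_cases h1 : (F q₀).1 = hi p₀
        · rw [if_pos h1] at hb; omega
        · rw [if_neg h1] at hb; omega
      · rw [if_neg h2] at hb
        by_cases h1 : (F q₀).1 = hi p₀
        · exact ⟨h1, h2⟩
        · rw [if_neg h1] at hb; omega
    -- Step B at c' = lo p₀
    have hstepB : (F q₀).2 = lo p₀ := by
      have hb := hB (lo p₀)
      have hno : ∀ q', (m+1 ≤ iR q') → hi q' ≠ lo p₀ ∧ lo q' ≠ lo p₀ := by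
        intro q' hq'
        constructor
        · intro hEq
          have := congrArg Prod.snd hEq
          simp [hi, lo] at this
        · intro hEq
          have : q' = p₀ := congrArg Prod.fst hEq
          rw [this] at hq'; omega
      have hsum : (∑ q : R k, ((if (F q).2 = lo p₀ then (1:ℤ) else 0) - (if (F q).1 = lo p₀ then 1 else 0)))
          = ((if (F q₀).2 = lo p₀ then (1:ℤ) else 0) - (if (F q₀).1 = lo p₀ then 1 else 0)) :=
        Finset.sum_eq_single q₀
          (hvanish (lo p₀) IH' (by simp [cN, lo]; omega) hno)
          (fun h => absurd (Finset.mem_univ q₀) h)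
      rw [hsum] at hb
      have hb2 : (if (lo p₀).2 then (1:ℤ) else -1) = -1 := rfl
      rw [hb2] at hb
      have h1 : (F q₀).1 ≠ lo p₀ := by
        rw [hstepA.1]
        intro h
        have := congrArg Prod.snd h
        simp [hi, lo] at this
      rw [if_neg h1] at hb
      by_cases h2 : (F q₀).2 = lo p₀
      · exact h2
      · rw [if_neg h2] at hb; omega
    -- Step C: labels
    have hl := hL q₀
    rw [hstepA.1, hstepB] at hl
    have hlab1 : p₀.1 = q₀.1 := by simpa [hi, lab] using hl.1
    have hlab2 : p₀.2 = q₀.2 := by simpa [lo, lab] using hl.2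
    have hpq : p₀ = q₀ := Prod.ext hlab1 hlab2
    exact ⟨hpq, Prod.ext (by rw [hstepA.1, hpq]) (by rw [hstepB, hpq])⟩


def Dd (k : ℕ) : ℕ := 2*(k*k) + 2
noncomputable def zeta (k : ℕ) : ℂ := Complex.exp (2 * Real.pi * Complex.I / (Dd k))

lemma Dd_pos (k : ℕ) : 0 < Dd k := by simp [Dd]

lemma zeta_prim (k : ℕ) : IsPrimitiveRoot (zeta k) (Dd k) :=
  Complex.isPrimitiveRoot_exp _ (Dd_pos k).ne'

lemma zeta_unit (k : ℕ) : (starRingEnd ℂ) (zeta k) * zeta k = 1 := by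
  rw [zeta, ← Complex.exp_conj, ← Complex.exp_add]
  have h : (starRingEnd ℂ) (2 * (Real.pi:ℂ) * Complex.I / (Dd k : ℂ))
      = -(2 * (Real.pi:ℂ) * Complex.I / (Dd k : ℂ)) := by
    simp only [map_div₀, _root_.map_mul, Complex.conj_I, Complex.conj_ofReal, map_ofNat,
      Complex.conj_natCast]
    ring
  rw [h, neg_add_cancel, Complex.exp_zero]

lemma sumroots (k : ℕ) {h g : ℕ} (hh : h < Dd k) (hg : g < Dd k) :
    ∑ j : Fin (Dd k), (zeta k ^ h * (starRingEnd ℂ) (zeta k) ^ g) ^ (j : ℕ)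
      = if h = g then (Dd k : ℂ) else 0 := by
  set ζ := zeta k with hζ
  set x := ζ ^ h * (starRingEnd ℂ) ζ ^ g with hx
  by_cases heq : h = g
  · subst heq
    have hx1 : x = 1 := by
      rw [hx, ← mul_pow, mul_comm, zeta_unit k, one_pow]
    rw [if_pos rfl, hx1]
    simp
  · rw [if_neg heq]
    have hxD : x ^ (Dd k) = 1 := by
      rw [hx, mul_pow, ← pow_mul, ← pow_mul, mul_comm h, mul_comm g, pow_mul, pow_mul]
      rw [(zeta_prim k).pow_eq_one, ← map_pow, (zeta_prim k).pow_eq_one]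
      simp
    have hx1 : x ≠ 1 := by
      intro hx1
      have h2 : ζ ^ h * ((starRingEnd ℂ) ζ * ζ) ^ g = ζ ^ g := by
        rw [mul_pow]
        calc ζ ^ h * ((starRingEnd ℂ) ζ ^ g * ζ ^ g)
            = (ζ ^ h * (starRingEnd ℂ) ζ ^ g) * ζ ^ g := by ring
          _ = ζ ^ g := by rw [← hx, hx1, one_mul]
      rw [zeta_unit k, one_pow, mul_one] at h2
      exact heq ((zeta_prim k).pow_inj hh hg h2)
    rw [Fin.sum_univ_eq_sum_range (fun i => x ^ i) (Dd k)]
    rw [geom_sum_eq hx1, hxD]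
    simp

lemma sum_comp_univ {α β : Type*} [Fintype α] [Fintype β] [DecidableEq β]
    (g : α → β) (f : β → ℕ) :
    ∑ a : α, f (g a) = ∑ b : β, (univ.filter fun a => g a = b).card * f b := by
  classical
  have h1 : ∀ a : α, f (g a) = ∑ b : β, if g a = b then f b else 0 := by
    intro a
    rw [Finset.sum_ite_eq]
    simp
  rw [Finset.sum_congr rfl (fun a _ => h1 a), Finset.sum_comm]
  refine Finset.sum_congr rfl (fun b _ => ?_)
  rw [← Finset.sum_filter, Finset.sum_const, smul_eq_mul]

lemma card_filter_hi {k : ℕ} (c : C k) :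
    (univ.filter fun q : R k => hi q = c).card = if c.2 then 1 else 0 := by
  rcases c with ⟨u, b⟩
  cases b
  · simp only [if_false, Bool.false_eq_true]
    rw [Finset.card_eq_zero, Finset.filter_eq_empty_iff]
    intro q _
    simp [hi]
  · simp only [if_true]
    have : (univ.filter fun q : R k => hi q = (u, true)) = {u} := by
      ext q; simp [hi, Prod.ext_iff]
    rw [this, Finset.card_singleton]

lemma card_filter_lo {k : ℕ} (c : C k) :
    (univ.filter fun q : R k => lo q = c).card = if c.2 then 0 else 1 := by
  rcases c with ⟨u, b⟩
  cases b
  · simp only [if_false]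
    have : (univ.filter fun q : R k => lo q = (u, false)) = {u} := by
      ext q; simp [lo, Prod.ext_iff]
    simp only [Bool.false_eq_true, if_false]
    rw [this, Finset.card_singleton]
  · simp only [if_true]
    rw [Finset.card_eq_zero, Finset.filter_eq_empty_iff]
    intro q _
    simp [lo]



noncomputable def Zm {k : ℕ} (a : R k → C k → C k → ℂ) (w : C k → ℂ) :
    Matrix (R k) (R k) ℂ :=
  Matrix.of fun p q => ∑ e : C k × C k,
    if lab e.1 = q.1 ∧ lab e.2 = q.2
    then (starRingEnd ℂ) (w e.1) * w e.2 * a p e.1 e.2 else 0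

noncomputable def wfn {k : ℕ} (t : C k → Fin (Dd k)) : C k → ℂ :=
  fun c => zeta k ^ ((t c : ℕ))


lemma exists_w {k : ℕ} (a : R k → C k → C k → ℂ)
    (H1 : ∀ p, a p (hi p) (lo p) ≠ 0)
    (H2 : ∀ p (c c' : C k), c ≠ c' → 2 * iR p + 1 < max (cN c) (cN c') → a p c c' = 0) :
    ∃ w : C k → ℂ, (∀ c, (starRingEnd ℂ) (w c) * w c = 1) ∧ (Zm a w).det ≠ 0 := by
  classical
  set ζ := zeta k with hζdef
  -- counts
  set cnt1 : (R k → C k × C k) → C k → ℕ :=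
    fun F c => (univ.filter fun q => (F q).1 = c).card with hcnt1
  set cnt2 : (R k → C k × C k) → C k → ℕ :=
    fun F c => (univ.filter fun q => (F q).2 = c).card with hcnt2
  set hcount : (R k → C k × C k) → C k → ℕ :=
    fun F c => cnt2 F c + (univ.filter fun q : R k => hi q = c).card with hhcount
  set gcount : (R k → C k × C k) → C k → ℕ :=
    fun F c => cnt1 F c + (univ.filter fun q : R k => lo q = c).card with hgcount
  set base : Equiv.Perm (R k) → (R k → C k × C k) → R k → ℂ :=
    fun σ F q => if lab (F q).1 = q.1 ∧ lab (F q).2 = q.2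
      then a (σ q) (F q).1 (F q).2 else 0 with hbase
  set test : (C k → Fin (Dd k)) → ℂ :=
    fun t => ∏ q : R k, (ζ ^ ((t (hi q) : ℕ)) * (starRingEnd ℂ) ζ ^ ((t (lo q) : ℕ))) with htest
  set S : ℂ := ∑ t : C k → Fin (Dd k), test t * (Zm a (wfn t)).det with hS
  -- counts bounded
  have hcard : ∀ (P : R k → Prop) [DecidablePred P], (univ.filter P).card ≤ k * k := by
    intro P _
    calc (univ.filter P).card ≤ (univ : Finset (R k)).card := Finset.card_filter_le _ _
      _ = k * k := by rw [Finset.card_univ]; simp [Fintype.card_prod]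
  have hcntlt : ∀ (F : R k → C k × C k) (c : C k),
      hcount F c < Dd k ∧ gcount F c < Dd k := by
    intro F c
    have h1 := hcard (fun q => (F q).1 = c)
    have h2 := hcard (fun q => (F q).2 = c)
    have h3 : (univ.filter fun q : R k => hi q = c).card ≤ 1 := by
      rw [card_filter_hi]; split_ifs <;> omega
    have h4 : (univ.filter fun q : R k => lo q = c).card ≤ 1 := by
      rw [card_filter_lo]; split_ifs <;> omega
    have hD : Dd k = 2*(k*k) + 2 := rfl
    constructor
    · simp only [hhcount, hcnt2]; omega
    · simp only [hgcount, hcnt1]; omega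
  -- the character sum
  have hCS : ∀ F : R k → C k × C k,
      (∑ t : C k → Fin (Dd k), test t *
        ∏ q, ((starRingEnd ℂ) ((wfn t) (F q).1) * (wfn t) ((F q).2)))
      = ∏ c : C k, (if hcount F c = gcount F c then ((Dd k : ℕ) : ℂ) else 0) := by
    intro F
    have hpoint : ∀ t : C k → Fin (Dd k),
        test t * ∏ q, ((starRingEnd ℂ) ((wfn t) (F q).1) * (wfn t) ((F q).2))
        = ∏ c : C k, ((ζ ^ (hcount F c) * (starRingEnd ℂ) ζ ^ (gcount F c)) ^ ((t c : ℕ))) := by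
      intro t
      have e1 : test t = ζ ^ (∑ q : R k, ((t (hi q)) : ℕ)) *
          (starRingEnd ℂ) ζ ^ (∑ q : R k, ((t (lo q)) : ℕ)) := by
        simp only [htest]
        rw [Finset.prod_mul_distrib, Finset.prod_pow_eq_pow_sum, Finset.prod_pow_eq_pow_sum]
      have e2 : (∏ q, ((starRingEnd ℂ) ((wfn t) (F q).1) * (wfn t) ((F q).2)))
          = (starRingEnd ℂ) ζ ^ (∑ q : R k, ((t ((F q).1)) : ℕ)) *
            ζ ^ (∑ q : R k, ((t ((F q).2)) : ℕ)) := by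
        have : ∀ q : R k, (starRingEnd ℂ) ((wfn t) (F q).1) * (wfn t) ((F q).2)
            = (starRingEnd ℂ) ζ ^ ((t ((F q).1)) : ℕ) * ζ ^ ((t ((F q).2)) : ℕ) := by
          intro q
          simp only [wfn, ← hζdef, map_pow]
        rw [Finset.prod_congr rfl (fun q _ => this q), Finset.prod_mul_distrib,
          Finset.prod_pow_eq_pow_sum, Finset.prod_pow_eq_pow_sum]
      rw [e1, e2]
      have eα : (∑ q : R k, ((t (hi q)) : ℕ)) + (∑ q : R k, ((t ((F q).2)) : ℕ))
          = ∑ c : C k, hcount F c * ((t c) : ℕ) := by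
        rw [sum_comp_univ (fun q => hi q) (fun c => ((t c) : ℕ)),
          sum_comp_univ (fun q => (F q).2) (fun c => ((t c) : ℕ)),
          ← Finset.sum_add_distrib]
        refine Finset.sum_congr rfl (fun c _ => ?_)
        simp only [hhcount, hcnt2]
        ring
      have eβ : (∑ q : R k, ((t (lo q)) : ℕ)) + (∑ q : R k, ((t ((F q).1)) : ℕ))
          = ∑ c : C k, gcount F c * ((t c) : ℕ) := by
        rw [sum_comp_univ (fun q => lo q) (fun c => ((t c) : ℕ)),
          sum_comp_univ (fun q => (F q).1) (fun c => ((t c) : ℕ)),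
          ← Finset.sum_add_distrib]
        refine Finset.sum_congr rfl (fun c _ => ?_)
        simp only [hgcount, hcnt1]
        ring
      calc ζ ^ (∑ q : R k, ((t (hi q)) : ℕ)) * (starRingEnd ℂ) ζ ^ (∑ q : R k, ((t (lo q)) : ℕ)) *
            ((starRingEnd ℂ) ζ ^ (∑ q : R k, ((t ((F q).1)) : ℕ)) * ζ ^ (∑ q : R k, ((t ((F q).2)) : ℕ)))
          = ζ ^ ((∑ q : R k, ((t (hi q)) : ℕ)) + (∑ q : R k, ((t ((F q).2)) : ℕ))) *
            (starRingEnd ℂ) ζ ^ ((∑ q : R k, ((t (lo q)) : ℕ)) + (∑ q : R k, ((t ((F q).1)) : ℕ))) := by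
            rw [pow_add, pow_add]; ring
        _ = ζ ^ (∑ c : C k, hcount F c * ((t c) : ℕ)) *
            (starRingEnd ℂ) ζ ^ (∑ c : C k, gcount F c * ((t c) : ℕ)) := by rw [eα, eβ]
        _ = (∏ c : C k, ζ ^ (hcount F c * ((t c) : ℕ))) *
            (∏ c : C k, (starRingEnd ℂ) ζ ^ (gcount F c * ((t c) : ℕ))) := by
            rw [Finset.prod_pow_eq_pow_sum, Finset.prod_pow_eq_pow_sum]
        _ = ∏ c : C k, (ζ ^ (hcount F c * ((t c) : ℕ)) *
            (starRingEnd ℂ) ζ ^ (gcount F c * ((t c) : ℕ))) := by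
            rw [Finset.prod_mul_distrib]
        _ = ∏ c : C k, ((ζ ^ (hcount F c) * (starRingEnd ℂ) ζ ^ (gcount F c)) ^ ((t c) : ℕ)) := by
            refine Finset.prod_congr rfl (fun c _ => ?_)
            rw [mul_pow, pow_mul, pow_mul]
    rw [Finset.sum_congr rfl (fun t _ => hpoint t)]
    have := Finset.prod_univ_sum (fun _ : C k => (univ : Finset (Fin (Dd k))))
      (fun c j => (ζ ^ (hcount F c) * (starRingEnd ℂ) ζ ^ (gcount F c)) ^ ((j : Fin (Dd k)) : ℕ))
    rw [Fintype.piFinset_univ] at this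
    rw [← this]
    refine Finset.prod_congr rfl (fun c _ => ?_)
    exact sumroots k (hcntlt F c).1 (hcntlt F c).2
  -- step A : expand S completely
  have hdet : ∀ t, (Zm a (wfn t)).det = ∑ σ : Equiv.Perm (R k),
      ((Equiv.Perm.sign σ : ℤ) : ℂ) * ∏ q, Zm a (wfn t) (σ q) q :=
    fun t => Matrix.det_apply' _
  have hentry : ∀ (t : C k → Fin (Dd k)) (σ : Equiv.Perm (R k)),
      (∏ q, Zm a (wfn t) (σ q) q) = ∑ F : R k → C k × C k,
        (∏ q, base σ F q) *
          (∏ q, ((starRingEnd ℂ) ((wfn t) (F q).1) * (wfn t) ((F q).2))) := by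
    intro t σ
    have h1 : ∀ q : R k, Zm a (wfn t) (σ q) q = ∑ e : C k × C k,
        (if lab e.1 = q.1 ∧ lab e.2 = q.2
         then (starRingEnd ℂ) ((wfn t) e.1) * (wfn t) e.2 * a (σ q) e.1 e.2 else 0) :=
      fun q => rfl
    rw [Finset.prod_congr rfl (fun q _ => h1 q), Finset.prod_univ_sum, Fintype.piFinset_univ]
    refine Finset.sum_congr rfl (fun F _ => ?_)
    rw [← Finset.prod_mul_distrib]
    refine Finset.prod_congr rfl (fun q _ => ?_)
    by_cases hq : lab (F q).1 = q.1 ∧ lab (F q).2 = q.2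
    · simp only [hbase]; rw [if_pos hq, if_pos hq]; ring
    · simp only [hbase]; rw [if_neg hq, if_neg hq, zero_mul]
  have hexp : S = ∑ σ : Equiv.Perm (R k), ∑ F : R k → C k × C k,
      (((Equiv.Perm.sign σ : ℤ) : ℂ) * ∏ q, base σ F q) *
        ∏ c : C k, (if hcount F c = gcount F c then ((Dd k : ℕ) : ℂ) else 0) := by
    rw [hS]
    have st1 : ∀ t, test t * (Zm a (wfn t)).det
        = ∑ σ : Equiv.Perm (R k), ∑ F : R k → C k × C k,
          ((((Equiv.Perm.sign σ : ℤ)):ℂ) * ∏ q, base σ F q) *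
            (test t * ∏ q, ((starRingEnd ℂ) ((wfn t) (F q).1) * (wfn t) ((F q).2))) := by
      intro t
      rw [hdet t, Finset.mul_sum]
      refine Finset.sum_congr rfl (fun σ _ => ?_)
      rw [hentry t σ, Finset.mul_sum, Finset.mul_sum]
      refine Finset.sum_congr rfl (fun F _ => ?_)
      ring
    rw [Finset.sum_congr rfl (fun t _ => st1 t), Finset.sum_comm]
    refine Finset.sum_congr rfl (fun σ _ => ?_)
    rw [Finset.sum_comm]
    refine Finset.sum_congr rfl (fun F _ => ?_)
    rw [← Finset.mul_sum, hCS F]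
  -- step B : identify the single nonvanishing term
  set Fcan : R k → C k × C k := fun q => (hi q, lo q) with hFcandef
  have hterm0 : ∀ (σ : Equiv.Perm (R k)) (F : R k → C k × C k), ¬(σ = 1 ∧ F = Fcan) →
      (((Equiv.Perm.sign σ : ℤ) : ℂ) * ∏ q, base σ F q) *
        ∏ c : C k, (if hcount F c = gcount F c then ((Dd k : ℕ) : ℂ) else 0) = 0 := by
    intro σ F hne
    by_contra h0
    have h1 : (∏ q, base σ F q) ≠ 0 := by
      intro h; rw [h] at h0; simp at h0
    have h2 : (∏ c : C k, (if hcount F c = gcount F c then ((Dd k : ℕ) : ℂ) else 0)) ≠ 0 := by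
      intro h; rw [h] at h0; simp at h0
    have hbq : ∀ q, base σ F q ≠ 0 :=
      fun q hq => h1 (Finset.prod_eq_zero (Finset.mem_univ q) hq)
    have hL : ∀ q, lab (F q).1 = q.1 ∧ lab (F q).2 = q.2 := by
      intro q
      have hb := hbq q
      simp only [hbase] at hb
      by_contra hc
      rw [if_neg hc] at hb; exact hb rfl
    have hA : ∀ q, a (σ q) (F q).1 (F q).2 ≠ 0 := by
      intro q
      have hb := hbq q
      simp only [hbase] at hb
      rwa [if_pos (hL q)] at hb
    have hNN : ∀ q, (F q).1 ≠ (F q).2 →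
        max (cN (F q).1) (cN (F q).2) ≤ 2 * iR (σ q) + 1 := by
      intro q hd
      by_contra hc
      exact hA q (H2 (σ q) _ _ hd (not_le.mp hc))
    have hbal : ∀ c : C k, hcount F c = gcount F c := by
      intro c
      by_contra hc
      exact h2 (Finset.prod_eq_zero (Finset.mem_univ c) (if_neg hc))
    have hB : ∀ c : C k,
        (∑ q : R k, ((if (F q).2 = c then (1:ℤ) else 0) - (if (F q).1 = c then 1 else 0)))
          + (if c.2 then 1 else -1) = 0 := by
      intro c
      have hb := hbal c
      simp only [hhcount, hgcount, hcnt1, hcnt2] at hb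
      rw [card_filter_hi, card_filter_lo] at hb
      have e2 : (∑ q : R k, (if (F q).2 = c then (1:ℤ) else 0))
          = ((univ.filter fun q : R k => (F q).2 = c).card : ℤ) := by
        simp [Finset.sum_boole]
      have e1 : (∑ q : R k, (if (F q).1 = c then (1:ℤ) else 0))
          = ((univ.filter fun q : R k => (F q).1 = c).card : ℤ) := by
        simp [Finset.sum_boole]
      rw [Finset.sum_sub_distrib, e1, e2]
      cases hcc : c.2
      · have t1 : (if (false : Bool) = true then (1:ℤ) else -1) = -1 := rfl
        have t2 : (if (false : Bool) = true then (1:ℕ) else 0) = 0 := rfl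
        have t3 : (if (false : Bool) = true then (0:ℕ) else 1) = 1 := rfl
        rw [t1]
        rw [hcc] at hb
        rw [t2, t3] at hb
        omega
      · have t1 : (if (true : Bool) = true then (1:ℤ) else -1) = 1 := rfl
        have t2 : (if (true : Bool) = true then (1:ℕ) else 0) = 1 := rfl
        have t3 : (if (true : Bool) = true then (0:ℕ) else 1) = 0 := rfl
        rw [t1]
        rw [hcc] at hb
        rw [t2, t3] at hb
        omega
    have hcomb := comb σ F hL hNN hB
    exact hne ⟨Equiv.ext (fun q => (hcomb q).1), funext (fun q => (hcomb q).2)⟩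
  have hval : (((Equiv.Perm.sign (1 : Equiv.Perm (R k)) : ℤ) : ℂ) * ∏ q, base 1 Fcan q) *
      ∏ c : C k, (if hcount Fcan c = gcount Fcan c then ((Dd k : ℕ) : ℂ) else 0)
      = (∏ q : R k, a q (hi q) (lo q)) * ((Dd k : ℕ) : ℂ) ^ (Fintype.card (C k)) := by
    have hb1 : ∀ q, base 1 Fcan q = a q (hi q) (lo q) := by
      intro q
      simp only [hbase, hFcandef]
      rw [if_pos (by constructor <;> simp [lab, hi, lo])]
      simp
    have hc1 : ∀ c : C k, hcount Fcan c = gcount Fcan c := by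
      intro c
      simp only [hhcount, hgcount, hcnt1, hcnt2, hFcandef]
      rw [card_filter_hi, card_filter_lo]
      cases hcc : c.2 <;> rfl
    rw [Finset.prod_congr rfl (fun q _ => hb1 q),
      Finset.prod_congr rfl (fun c _ => if_pos (hc1 c)),
      Finset.prod_const, Finset.card_univ]
    simp
  have hsingle : S = (∏ q : R k, a q (hi q) (lo q)) * ((Dd k : ℕ) : ℂ) ^ (Fintype.card (C k)) := by
    rw [hexp]
    rw [Finset.sum_eq_single (1 : Equiv.Perm (R k))]
    · rw [Finset.sum_eq_single Fcan]
      · exact hval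
      · intro F _ hF
        exact hterm0 1 F (by rintro ⟨-, h⟩; exact hF h)
      · intro h; exact absurd (Finset.mem_univ _) h
    · intro σ _ hσ
      exact Finset.sum_eq_zero (fun F _ => hterm0 σ F (by rintro ⟨h, -⟩; exact hσ h))
    · intro h; exact absurd (Finset.mem_univ _) h
  have hSne : S ≠ 0 := by
    rw [hsingle]
    refine mul_ne_zero ?_ (pow_ne_zero _ ?_)
    · rw [Finset.prod_ne_zero_iff]
      exact fun q _ => H1 q
    · exact_mod_cast (Dd_pos k).ne'
  obtain ⟨t, -, ht⟩ := Finset.exists_ne_zero_of_sum_ne_zero hSne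
  refine ⟨wfn t, ?_, ?_⟩
  · intro c
    rw [wfn, ← hζdef, map_pow, ← mul_pow, zeta_unit k, one_pow]
  · intro hdet
    rw [hdet, mul_zero] at ht
    exact ht rfl


section Lin

variable {k n : ℕ} (hn : 2 * (k * k) ≤ n) (w : C k → ℂ)

def coordF (hn : 2 * (k * k) ≤ n) (c : C k) : Fin n :=
  ⟨cN c, lt_of_lt_of_le (cN_lt c) hn⟩

lemma coordF_inj : Function.Injective (coordF (k := k) hn) := by
  intro c c' h
  exact cN_inj (k := k) (congrArg Fin.val h)

noncomputable def vv (x : Fin k) : Fin n → ℂ :=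
  fun j => ∑ c : C k, if coordF hn c = j ∧ lab c = x then w c else 0

noncomputable def mcard (k : ℕ) (x : Fin k) : ℕ :=
  ((univ : Finset (C k)).filter fun c => lab c = x).card

lemma mcard_pos {k : ℕ} (x : Fin k) : 0 < mcard k x := by
  rw [mcard, Finset.card_pos]
  exact ⟨((x, x), true), Finset.mem_filter.mpr ⟨Finset.mem_univ _, rfl⟩⟩

-- collapse lemmas
lemma sum_vv (x : Fin k) (g : Fin n → ℂ) :
    (∑ j : Fin n, vv hn w x j * g j)
      = ∑ c : C k, (if lab c = x then w c * g (coordF hn c) else 0) := by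
  have h1 : ∀ j : Fin n, vv hn w x j * g j
      = ∑ c : C k, (if coordF hn c = j then (if lab c = x then w c * g j else 0) else 0) := by
    intro j
    rw [vv, Finset.sum_mul]
    refine Finset.sum_congr rfl (fun c _ => ?_)
    by_cases h1 : coordF hn c = j <;> by_cases h2 : lab c = x <;>
      simp [h1, h2]
  rw [Finset.sum_congr rfl (fun j _ => h1 j), Finset.sum_comm]
  refine Finset.sum_congr rfl (fun c _ => ?_)
  rw [Finset.sum_ite_eq (univ : Finset (Fin n)) (coordF hn c)
    (fun j => if lab c = x then w c * g j else 0)]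
  simp

lemma conj_vv (x : Fin k) (j : Fin n) :
    (starRingEnd ℂ) (vv hn w x j)
      = ∑ c : C k, if coordF hn c = j ∧ lab c = x then (starRingEnd ℂ) (w c) else 0 := by
  rw [vv, map_sum]
  refine Finset.sum_congr rfl (fun c _ => ?_)
  rw [apply_ite (starRingEnd ℂ), map_zero]

lemma sum_conj_vv (x : Fin k) (g : Fin n → ℂ) :
    (∑ j : Fin n, (starRingEnd ℂ) (vv hn w x j) * g j)
      = ∑ c : C k, (if lab c = x then (starRingEnd ℂ) (w c) * g (coordF hn c) else 0) := by
  have h1 : ∀ j : Fin n, (starRingEnd ℂ) (vv hn w x j) * g j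
      = ∑ c : C k, (if coordF hn c = j then (if lab c = x then (starRingEnd ℂ) (w c) * g j else 0) else 0) := by
    intro j
    rw [conj_vv, Finset.sum_mul]
    refine Finset.sum_congr rfl (fun c _ => ?_)
    by_cases h1 : coordF hn c = j <;> by_cases h2 : lab c = x <;>
      simp [h1, h2]
  rw [Finset.sum_congr rfl (fun j _ => h1 j), Finset.sum_comm]
  refine Finset.sum_congr rfl (fun c _ => ?_)
  rw [Finset.sum_ite_eq (univ : Finset (Fin n)) (coordF hn c)
    (fun j => if lab c = x then (starRingEnd ℂ) (w c) * g j else 0)]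
  simp

-- orthogonality
lemma orth (hw : ∀ c, (starRingEnd ℂ) (w c) * w c = 1) (x y : Fin k) :
    (∑ j : Fin n, (starRingEnd ℂ) (vv hn w x j) * vv hn w y j)
      = if x = y then ((mcard k x : ℕ) : ℂ) else 0 := by
  rw [sum_conj_vv hn w x (vv hn w y)]
  have h1 : ∀ c : C k, vv hn w y (coordF hn c) = if lab c = y then w c else 0 := by
    intro c
    rw [vv]
    rw [Finset.sum_eq_single c]
    · simp
    · intro c' _ hne
      rw [if_neg]
      rintro ⟨h1, -⟩
      exact hne (coordF_inj hn h1)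
    · intro hc; exact absurd (Finset.mem_univ c) hc
  rw [Finset.sum_congr rfl (fun c _ => by rw [h1 c])]
  by_cases hxy : x = y
  · subst hxy
    rw [if_pos rfl, mcard]
    have h2 : ∀ c : C k, (if lab c = x then (starRingEnd ℂ) (w c) * (if lab c = x then w c else 0) else 0)
        = if lab c = x then (1:ℂ) else 0 := by
      intro c
      by_cases h : lab c = x
      · rw [if_pos h, if_pos h, if_pos h, hw c]
      · rw [if_neg h, if_neg h]
    rw [Finset.sum_congr rfl (fun c _ => h2 c), Finset.sum_boole]
  · rw [if_neg hxy]
    refine Finset.sum_eq_zero (fun c _ => ?_)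
    by_cases h : lab c = x
    · rw [if_pos h, if_neg (fun h2 => hxy (by rw [← h, ← h2])), mul_zero]
    · rw [if_neg h]

-- the compression map to k×k matrices
noncomputable def phiL (hn : 2 * (k * k) ≤ n) (w : C k → ℂ) :
    Matrix (Fin n) (Fin n) ℂ →ₗ[ℂ] Matrix (Fin k) (Fin k) ℂ where
  toFun X := Matrix.of fun b a =>
    ∑ j : Fin n, (starRingEnd ℂ) (vv hn w b j) * (X.mulVec (vv hn w a)) j
  map_add' X Y := by
    ext b a
    simp only [Matrix.of_apply, Matrix.add_apply, Matrix.add_mulVec, Pi.add_apply]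
    rw [← Finset.sum_add_distrib]
    refine Finset.sum_congr rfl (fun j _ => ?_)
    ring
  map_smul' cc X := by
    ext b a
    simp only [Matrix.of_apply, RingHom.id_apply, Matrix.smul_apply, smul_eq_mul,
      Matrix.smul_mulVec, Pi.smul_apply]
    rw [Finset.mul_sum]
    refine Finset.sum_congr rfl (fun j _ => ?_)
    ring

lemma phiL_apply (X : Matrix (Fin n) (Fin n) ℂ) (b a : Fin k) :
    phiL hn w X b a = ∑ j : Fin n, (starRingEnd ℂ) (vv hn w b j) * (X.mulVec (vv hn w a)) j := rfl

lemma mulVec_apply' (X : Matrix (Fin n) (Fin n) ℂ) (v : Fin n → ℂ) (i : Fin n) :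
    X.mulVec v i = ∑ j : Fin n, X i j * v j := rfl

lemma phiP (X : Matrix (Fin n) (Fin n) ℂ) (b a : Fin k) :
    phiL hn w X b a = ∑ c : C k, ∑ c' : C k,
      (if lab c = b ∧ lab c' = a
       then (starRingEnd ℂ) (w c) * w c' * X (coordF hn c) (coordF hn c') else 0) := by
  rw [phiL_apply, sum_conj_vv hn w b (fun j => (X.mulVec (vv hn w a)) j)]
  refine Finset.sum_congr rfl (fun c _ => ?_)
  have h1 : (X.mulVec (vv hn w a)) (coordF hn c)
      = ∑ c' : C k, (if lab c' = a then w c' * X (coordF hn c) (coordF hn c') else 0) := by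
    rw [mulVec_apply']
    have : ∀ j, X (coordF hn c) j * vv hn w a j = vv hn w a j * X (coordF hn c) j :=
      fun j => mul_comm _ _
    rw [Finset.sum_congr rfl (fun j _ => this j)]
    exact sum_vv hn w a (fun j => X (coordF hn c) j)
  by_cases hc : lab c = b
  · rw [if_pos hc, h1, Finset.mul_sum]
    refine Finset.sum_congr rfl (fun c' _ => ?_)
    by_cases hc' : lab c' = a
    · rw [if_pos hc', if_pos ⟨hc, hc'⟩]; ring
    · rw [if_neg hc', if_neg (fun h => hc' h.2), mul_zero]
  · rw [if_neg hc]
    refine (Finset.sum_eq_zero (fun c' _ => ?_)).symm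
    rw [if_neg (fun h => hc h.1)]

lemma phiZ (aM : R k → Matrix (Fin n) (Fin n) ℂ) (p : R k) (q : R k) :
    phiL hn w (aM p) q.1 q.2
      = Zm (fun p' c c' => aM p' (coordF hn c) (coordF hn c')) w p q := by
  rw [phiP]
  rw [show Zm (fun p' c c' => aM p' (coordF hn c) (coordF hn c')) w p q
    = ∑ e : C k × C k, (if lab e.1 = q.1 ∧ lab e.2 = q.2
        then (starRingEnd ℂ) (w e.1) * w e.2 * aM p (coordF hn e.1) (coordF hn e.2) else 0) from rfl]
  exact (Fintype.sum_prod_type (f := fun e : C k × C k =>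
    if lab e.1 = q.1 ∧ lab e.2 = q.2
    then (starRingEnd ℂ) (w e.1) * w e.2 * aM p (coordF hn e.1) (coordF hn e.2) else 0)).symm

-- the projection
noncomputable def PP (hn : 2 * (k * k) ≤ n) (w : C k → ℂ) : Matrix (Fin n) (Fin n) ℂ :=
  Matrix.of fun j l => ∑ x : Fin k,
    ((mcard k x : ℕ) : ℂ)⁻¹ * vv hn w x j * (starRingEnd ℂ) (vv hn w x l)

lemma m_ne (x : Fin k) : ((mcard k x : ℕ) : ℂ) ≠ 0 :=
  Nat.cast_ne_zero.mpr (mcard_pos x).ne'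

lemma PP_mulVec_vv (hw : ∀ c, (starRingEnd ℂ) (w c) * w c = 1) (x : Fin k) :
    (PP hn w).mulVec (vv hn w x) = vv hn w x := by
  funext j
  rw [mulVec_apply']
  have h1 : ∀ l, PP hn w j l * vv hn w x l
      = ∑ y : Fin k, ((mcard k y : ℕ) : ℂ)⁻¹ * vv hn w y j *
          ((starRingEnd ℂ) (vv hn w y l) * vv hn w x l) := by
    intro l
    rw [PP, Matrix.of_apply, Finset.sum_mul]
    refine Finset.sum_congr rfl (fun y _ => ?_)
    ring
  rw [Finset.sum_congr rfl (fun l _ => h1 l), Finset.sum_comm]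
  have h2 : ∀ y : Fin k, (∑ l : Fin n, ((mcard k y : ℕ) : ℂ)⁻¹ * vv hn w y j *
      ((starRingEnd ℂ) (vv hn w y l) * vv hn w x l))
      = ((mcard k y : ℕ) : ℂ)⁻¹ * vv hn w y j *
        (if y = x then ((mcard k y : ℕ) : ℂ) else 0) := by
    intro y
    rw [← Finset.mul_sum, orth hn w hw y x]
  rw [Finset.sum_congr rfl (fun y _ => h2 y)]
  rw [Finset.sum_eq_single x]
  · rw [if_pos rfl, mul_comm, ← mul_assoc, mul_inv_cancel₀ (m_ne x), one_mul]
  · intro y _ hy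
    rw [if_neg hy, mul_zero]
  · intro hx; exact absurd (Finset.mem_univ x) hx

lemma vv_vecMul_PP (hw : ∀ c, (starRingEnd ℂ) (w c) * w c = 1) (x : Fin k) (l : Fin n) :
    (∑ j : Fin n, (starRingEnd ℂ) (vv hn w x j) * PP hn w j l)
      = (starRingEnd ℂ) (vv hn w x l) := by
  have h1 : ∀ j, (starRingEnd ℂ) (vv hn w x j) * PP hn w j l
      = ∑ y : Fin k, ((mcard k y : ℕ) : ℂ)⁻¹ *
          ((starRingEnd ℂ) (vv hn w x j) * vv hn w y j) * (starRingEnd ℂ) (vv hn w y l) := by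
    intro j
    rw [PP, Matrix.of_apply, Finset.mul_sum]
    refine Finset.sum_congr rfl (fun y _ => ?_)
    ring
  rw [Finset.sum_congr rfl (fun j _ => h1 j), Finset.sum_comm]
  have h2 : ∀ y : Fin k, (∑ j : Fin n, ((mcard k y : ℕ) : ℂ)⁻¹ *
      ((starRingEnd ℂ) (vv hn w x j) * vv hn w y j) * (starRingEnd ℂ) (vv hn w y l))
      = ((mcard k y : ℕ) : ℂ)⁻¹ * (if x = y then ((mcard k x : ℕ) : ℂ) else 0) *
          (starRingEnd ℂ) (vv hn w y l) := by
    intro y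
    calc (∑ j : Fin n, ((mcard k y : ℕ) : ℂ)⁻¹ *
        ((starRingEnd ℂ) (vv hn w x j) * vv hn w y j) * (starRingEnd ℂ) (vv hn w y l))
        = ((mcard k y : ℕ) : ℂ)⁻¹ *
          (∑ j : Fin n, (starRingEnd ℂ) (vv hn w x j) * vv hn w y j) *
            (starRingEnd ℂ) (vv hn w y l) := by
          rw [Finset.mul_sum, Finset.sum_mul]
          all_goals exact Finset.sum_congr rfl (fun j _ => by ring)
      _ = _ := by rw [orth hn w hw x y]
  rw [Finset.sum_congr rfl (fun y _ => h2 y)]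
  rw [Finset.sum_eq_single x]
  · rw [if_pos rfl, mul_comm (((mcard k x : ℕ) : ℂ))⁻¹, mul_inv_cancel₀ (m_ne x), one_mul]
  · intro y _ hy
    rw [if_neg (fun h => hy h.symm), mul_zero, zero_mul]
  · intro hx; exact absurd (Finset.mem_univ x) hx

lemma PP_idem (hw : ∀ c, (starRingEnd ℂ) (w c) * w c = 1) :
    PP hn w * PP hn w = PP hn w := by
  ext j l
  rw [Matrix.mul_apply]
  have h1 : ∀ i, PP hn w j i * PP hn w i l
      = ∑ y : Fin k, ((mcard k y : ℕ) : ℂ)⁻¹ * (PP hn w j i * vv hn w y i) *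
          (starRingEnd ℂ) (vv hn w y l) := by
    intro i
    conv_lhs => rw [show PP hn w i l = ∑ y : Fin k,
      ((mcard k y : ℕ) : ℂ)⁻¹ * vv hn w y i * (starRingEnd ℂ) (vv hn w y l) from rfl]
    rw [Finset.mul_sum]
    refine Finset.sum_congr rfl (fun y _ => ?_)
    ring
  rw [Finset.sum_congr rfl (fun i _ => h1 i), Finset.sum_comm]
  have h2 : ∀ y : Fin k, (∑ i : Fin n, ((mcard k y : ℕ) : ℂ)⁻¹ * (PP hn w j i * vv hn w y i) *
      (starRingEnd ℂ) (vv hn w y l))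
      = ((mcard k y : ℕ) : ℂ)⁻¹ * vv hn w y j * (starRingEnd ℂ) (vv hn w y l) := by
    intro y
    have h3 : (∑ i : Fin n, PP hn w j i * vv hn w y i) = vv hn w y j := by
      have h4 := congrFun (PP_mulVec_vv hn w hw y) j
      rwa [mulVec_apply'] at h4
    calc (∑ i : Fin n, ((mcard k y : ℕ) : ℂ)⁻¹ * (PP hn w j i * vv hn w y i) *
        (starRingEnd ℂ) (vv hn w y l))
        = ((mcard k y : ℕ) : ℂ)⁻¹ * (∑ i : Fin n, PP hn w j i * vv hn w y i) *
          (starRingEnd ℂ) (vv hn w y l) := by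
          rw [Finset.mul_sum, Finset.sum_mul]
          all_goals exact Finset.sum_congr rfl (fun i _ => by ring)
      _ = _ := by rw [h3]
  rw [Finset.sum_congr rfl (fun y _ => h2 y)]
  rfl

lemma PP_herm : (PP hn w)ᴴ = PP hn w := by
  ext j l
  rw [Matrix.conjTranspose_apply, PP, Matrix.of_apply, Matrix.of_apply]
  rw [show (star (∑ x : Fin k, ((mcard k x : ℕ) : ℂ)⁻¹ * vv hn w x l * (starRingEnd ℂ) (vv hn w x j)))
      = (starRingEnd ℂ) (∑ x : Fin k, ((mcard k x : ℕ) : ℂ)⁻¹ * vv hn w x l * (starRingEnd ℂ) (vv hn w x j)) from rfl]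
  rw [map_sum]
  refine Finset.sum_congr rfl (fun x _ => ?_)
  rw [_root_.map_mul, _root_.map_mul, Complex.conj_conj]
  rw [show (starRingEnd ℂ) (((mcard k x : ℕ) : ℂ))⁻¹ = (((mcard k x : ℕ) : ℂ))⁻¹ by
    rw [map_inv₀, Complex.conj_natCast]]
  ring

lemma vv_linearIndependent (hw : ∀ c, (starRingEnd ℂ) (w c) * w c = 1) :
    LinearIndependent ℂ (vv hn w) := by
  rw [Fintype.linearIndependent_iff]
  intro g hg x
  have h0 : (∑ j : Fin n, (starRingEnd ℂ) (vv hn w x j) * (∑ y : Fin k, g y • vv hn w y) j) = 0 := by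
    rw [hg]
    simp
  have h1 : ∀ j : Fin n, (starRingEnd ℂ) (vv hn w x j) * (∑ y : Fin k, g y • vv hn w y) j
      = ∑ y : Fin k, g y * ((starRingEnd ℂ) (vv hn w x j) * vv hn w y j) := by
    intro j
    rw [Finset.sum_apply, Finset.mul_sum]
    refine Finset.sum_congr rfl (fun y _ => ?_)
    rw [Pi.smul_apply, smul_eq_mul]
    ring
  rw [Finset.sum_congr rfl (fun j _ => h1 j), Finset.sum_comm] at h0
  have h2 : ∀ y : Fin k, (∑ j : Fin n, g y * ((starRingEnd ℂ) (vv hn w x j) * vv hn w y j))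
      = g y * (if x = y then ((mcard k x : ℕ) : ℂ) else 0) := by
    intro y
    rw [← Finset.mul_sum, orth hn w hw x y]
  rw [Finset.sum_congr rfl (fun y _ => h2 y), Finset.sum_eq_single x] at h0
  · rw [if_pos rfl] at h0
    exact (mul_eq_zero.mp h0).resolve_right (m_ne x)
  · intro y _ hy
    rw [if_neg (fun h => hy h.symm), mul_zero]
  · intro hx; exact absurd (Finset.mem_univ x) hx

lemma PP_rank (hw : ∀ c, (starRingEnd ℂ) (w c) * w c = 1) : (PP hn w).rank = k := by
  have hrange : LinearMap.range (PP hn w).mulVecLin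
      = Submodule.span ℂ (Set.range (vv hn w)) := by
    apply le_antisymm
    · rintro y ⟨z, rfl⟩
      have hz : (PP hn w).mulVec z = ∑ x : Fin k,
          (((mcard k x : ℕ) : ℂ)⁻¹ * (∑ l : Fin n, (starRingEnd ℂ) (vv hn w x l) * z l)) •
            vv hn w x := by
        funext j
        rw [mulVec_apply']
        have h1 : ∀ l, PP hn w j l * z l = ∑ x : Fin k,
            ((mcard k x : ℕ) : ℂ)⁻¹ * vv hn w x j * ((starRingEnd ℂ) (vv hn w x l) * z l) := by
          intro l
          rw [PP, Matrix.of_apply, Finset.sum_mul]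
          exact Finset.sum_congr rfl (fun x _ => by ring)
        rw [Finset.sum_congr rfl (fun l _ => h1 l), Finset.sum_comm, Finset.sum_apply]
        refine Finset.sum_congr rfl (fun x _ => ?_)
        rw [Pi.smul_apply, smul_eq_mul, ← Finset.mul_sum]
        ring
      rw [Matrix.mulVecLin_apply, hz]
      exact Submodule.sum_mem _ (fun x _ =>
        Submodule.smul_mem _ _ (Submodule.subset_span ⟨x, rfl⟩))
    · rw [Submodule.span_le]
      rintro y ⟨x, rfl⟩
      exact ⟨vv hn w x, by rw [Matrix.mulVecLin_apply, PP_mulVec_vv hn w hw x]⟩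
  rw [show (PP hn w).rank = Module.finrank ℂ (LinearMap.range (PP hn w).mulVecLin) from rfl,
    hrange, finrank_span_eq_card (vv_linearIndependent hn w hw), Fintype.card_fin]

lemma phi_compress (hw : ∀ c, (starRingEnd ℂ) (w c) * w c = 1)
    (X : Matrix (Fin n) (Fin n) ℂ) :
    phiL hn w (PP hn w * X * PP hn w) = phiL hn w X := by
  ext b a
  rw [phiL_apply, phiL_apply]
  have key : (PP hn w * X * PP hn w).mulVec (vv hn w a)
      = (PP hn w).mulVec (X.mulVec (vv hn w a)) := by
    rw [← Matrix.mulVec_mulVec, ← Matrix.mulVec_mulVec, PP_mulVec_vv hn w hw a]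
  rw [key]
  have h2 : ∀ j, (starRingEnd ℂ) (vv hn w b j) * ((PP hn w).mulVec (X.mulVec (vv hn w a))) j
      = ∑ l : Fin n, ((starRingEnd ℂ) (vv hn w b j) * PP hn w j l) * (X.mulVec (vv hn w a)) l := by
    intro j
    rw [mulVec_apply', Finset.mul_sum]
    exact Finset.sum_congr rfl (fun l _ => by ring)
  rw [Finset.sum_congr rfl (fun j _ => h2 j), Finset.sum_comm]
  refine Finset.sum_congr rfl (fun l _ => ?_)
  rw [← Finset.sum_mul, vv_vecMul_PP hn w hw b l]

lemma phi_recon (hw : ∀ c, (starRingEnd ℂ) (w c) * w c = 1)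
    (X : Matrix (Fin n) (Fin n) ℂ) (h : phiL hn w X = 0) :
    PP hn w * X * PP hn w = 0 := by
  ext j l
  rw [Matrix.zero_apply]
  have e0 : (PP hn w * X * PP hn w) j l
      = ∑ i' : Fin n, (∑ i : Fin n, PP hn w j i * X i i') * PP hn w i' l := by
    rw [Matrix.mul_apply]
    exact Finset.sum_congr rfl (fun i' _ => by rw [Matrix.mul_apply])
  rw [e0]
  have e1 : ∀ i', (∑ i : Fin n, PP hn w j i * X i i')
      = ∑ x : Fin k, ((mcard k x : ℕ) : ℂ)⁻¹ * vv hn w x j *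
          (∑ i : Fin n, (starRingEnd ℂ) (vv hn w x i) * X i i') := by
    intro i'
    have h1 : ∀ i, PP hn w j i * X i i' = ∑ x : Fin k,
        ((mcard k x : ℕ) : ℂ)⁻¹ * vv hn w x j * ((starRingEnd ℂ) (vv hn w x i) * X i i') := by
      intro i
      rw [PP, Matrix.of_apply, Finset.sum_mul]
      exact Finset.sum_congr rfl (fun x _ => by ring)
    rw [Finset.sum_congr rfl (fun i _ => h1 i), Finset.sum_comm]
    refine Finset.sum_congr rfl (fun x _ => ?_)
    rw [← Finset.mul_sum]
  rw [Finset.sum_congr rfl (fun i' _ => by rw [e1 i'])]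
  have e2 : ∀ i', (∑ x : Fin k, ((mcard k x : ℕ) : ℂ)⁻¹ * vv hn w x j *
      (∑ i : Fin n, (starRingEnd ℂ) (vv hn w x i) * X i i')) * PP hn w i' l
      = ∑ x : Fin k, (((mcard k x : ℕ) : ℂ)⁻¹ * vv hn w x j *
          (∑ i : Fin n, (starRingEnd ℂ) (vv hn w x i) * X i i')) * PP hn w i' l := by
    intro i'
    rw [Finset.sum_mul]
  rw [Finset.sum_congr rfl (fun i' _ => e2 i'), Finset.sum_comm]
  refine Finset.sum_eq_zero (fun x _ => ?_)
  have e3 : ∀ i', (((mcard k x : ℕ) : ℂ)⁻¹ * vv hn w x j *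
      (∑ i : Fin n, (starRingEnd ℂ) (vv hn w x i) * X i i')) * PP hn w i' l
      = ∑ y : Fin k, (((mcard k x : ℕ) : ℂ)⁻¹ * vv hn w x j * ((mcard k y : ℕ) : ℂ)⁻¹ *
          (starRingEnd ℂ) (vv hn w y l)) *
          ((∑ i : Fin n, (starRingEnd ℂ) (vv hn w x i) * X i i') * vv hn w y i') := by
    intro i'
    rw [PP, Matrix.of_apply, Finset.mul_sum]
    exact Finset.sum_congr rfl (fun y _ => by ring)
  rw [Finset.sum_congr rfl (fun i' _ => e3 i'), Finset.sum_comm]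
  refine Finset.sum_eq_zero (fun y _ => ?_)
  rw [← Finset.mul_sum]
  have e4 : (∑ i' : Fin n, (∑ i : Fin n, (starRingEnd ℂ) (vv hn w x i) * X i i') * vv hn w y i')
      = phiL hn w X x y := by
    rw [phiL_apply]
    have h1 : ∀ i', (∑ i : Fin n, (starRingEnd ℂ) (vv hn w x i) * X i i') * vv hn w y i'
        = ∑ i : Fin n, (starRingEnd ℂ) (vv hn w x i) * (X i i' * vv hn w y i') := by
      intro i'
      rw [Finset.sum_mul]
      exact Finset.sum_congr rfl (fun i _ => by ring)
    rw [Finset.sum_congr rfl (fun i' _ => h1 i'), Finset.sum_comm]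
    refine Finset.sum_congr rfl (fun i _ => ?_)
    rw [mulVec_apply', Finset.mul_sum]
  rw [e4, h]
  rw [Matrix.zero_apply, mul_zero]

end Lin

end QRC

open QRC
/-- Lemma 4.4 of the paper: with `n = k⁴ + k³ + k - 1`, if an operator system
`𝒱` contains matrices `A₁, …, A_{k⁴+k³}` with `⟨Aᵢeᵢ, e_{i+1}⟩ ≠ 0` and
`⟨Aᵢeᵣ, eₛ⟩ = 0` whenever `max{r,s} > i + 1` and `r ≠ s`, then `𝒱` has a
quantum `k`-clique. -/
theorem blocks2_quantum_clique (k n : ℕ) (hn : n = k ^ 4 + k ^ 3 + k - 1)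
    (V : Submodule ℂ (Matrix (Fin n) (Fin n) ℂ)) (hos : IsOperatorSystem V)
    (A : Fin (k ^ 4 + k ^ 3) → Matrix (Fin n) (Fin n) ℂ)
    (hmem : ∀ i, A i ∈ V)
    (hoff : ∀ i : Fin (k ^ 4 + k ^ 3), ∃ r s : Fin n,
      (r : ℕ) = (i : ℕ) ∧ (s : ℕ) = (i : ℕ) + 1 ∧ A i s r ≠ 0)
    (hzero : ∀ (i : Fin (k ^ 4 + k ^ 3)) (r s : Fin n),
      (i : ℕ) + 1 < max (r : ℕ) (s : ℕ) → (r : ℕ) ≠ (s : ℕ) → A i r s = 0) :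
    ∃ P : Matrix (Fin n) (Fin n) ℂ, P * P = P ∧ Pᴴ = P ∧ P.rank = k ∧
      Module.finrank ℂ (V.map (compress P)) = k ^ 2 := by
  classical
  rcases Nat.eq_zero_or_pos k with hk0 | hkpos
  · -- k = 0
    subst hk0
    refine ⟨0, by rw [Matrix.zero_mul], Matrix.conjTranspose_zero, Matrix.rank_zero, ?_⟩
    have hbot : V.map (compress (0 : Matrix (Fin n) (Fin n) ℂ)) = ⊥ := by
      rw [Submodule.eq_bot_iff]
      rintro Y ⟨X, -, rfl⟩
      show (0 : Matrix (Fin n) (Fin n) ℂ) * X * 0 = 0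
      rw [Matrix.zero_mul, Matrix.mul_zero]
    rw [hbot, finrank_bot]
    simp
  · -- k ≥ 1
    have hkk3 : k * k ≤ k * k * k := Nat.le_mul_of_pos_right _ hkpos
    have hkk4 : k * k * k ≤ k * k * k * k := Nat.le_mul_of_pos_right _ hkpos
    have e4 : k ^ 4 = k * k * k * k := by ring
    have e3 : k ^ 3 = k * k * k := by ring
    have hn2 : 2 * (k * k) ≤ n := by omega
    have hNlt : ∀ p : R k, 2 * iR p < k ^ 4 + k ^ 3 := by
      intro p
      have := iR_lt p
      omega
    set opIdx : R k → Fin (k ^ 4 + k ^ 3) := fun p => ⟨2 * iR p, hNlt p⟩ with hopIdx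
    set aZ : R k → C k → C k → ℂ :=
      fun p c c' => A (opIdx p) (coordF hn2 c) (coordF hn2 c') with haZ
    have H1 : ∀ p, aZ p (hi p) (lo p) ≠ 0 := by
      intro p
      obtain ⟨r, s, hr, hs, hA⟩ := hoff (opIdx p)
      have hcr : coordF hn2 (lo p) = r := by
        apply Fin.ext
        show cN (lo p) = (r : ℕ)
        rw [hr]
        show 2 * iR p + 0 = (opIdx p : ℕ)
        rfl
      have hcs : coordF hn2 (hi p) = s := by
        apply Fin.ext
        show cN (hi p) = (s : ℕ)
        rw [hs]
        rfl
      simp only [haZ]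
      rw [hcr, hcs]
      exact hA
    have H2 : ∀ p (c c' : C k), c ≠ c' →
        2 * iR p + 1 < max (cN c) (cN c') → aZ p c c' = 0 := by
      intro p c c' hne hlt
      simp only [haZ]
      refine hzero (opIdx p) _ _ ?_ ?_
      · exact hlt
      · exact fun h => hne (cN_inj h)
    obtain ⟨w, hw, hdet⟩ := exists_w aZ H1 H2
    refine ⟨PP hn2 w, PP_idem hn2 w hw, PP_herm hn2 w, PP_rank hn2 w hw, ?_⟩
    -- dimension count
    set W := V.map (compress (PP hn2 w)) with hW
    set f : W →ₗ[ℂ] Matrix (Fin k) (Fin k) ℂ := (phiL hn2 w).comp W.subtype with hf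
    have hinj : Function.Injective f := by
      rw [injective_iff_map_eq_zero]
      rintro ⟨Y, hY⟩ h0
      obtain ⟨X, hX, hXY⟩ := Submodule.mem_map.mp hY
      have hYX : Y = PP hn2 w * X * PP hn2 w := by rw [← hXY]; rfl
      have hphiY : phiL hn2 w Y = 0 := h0
      have hphiX : phiL hn2 w X = 0 := by
        rw [hYX] at hphiY
        rwa [phi_compress hn2 w hw X] at hphiY
      have : Y = 0 := by rw [hYX]; exact phi_recon hn2 w hw X hphiX
      exact Subtype.ext this
    have hfr1 : Module.finrank ℂ W = Module.finrank ℂ (LinearMap.range f) :=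
      (LinearMap.finrank_range_of_inj hinj).symm
    have hmemW : ∀ p : R k, compress (PP hn2 w) (A (opIdx p)) ∈ W :=
      fun p => Submodule.mem_map_of_mem (hmem (opIdx p))
    have hfval : ∀ p : R k, phiL hn2 w (A (opIdx p)) ∈ LinearMap.range f := by
      intro p
      refine ⟨⟨compress (PP hn2 w) (A (opIdx p)), hmemW p⟩, ?_⟩
      show phiL hn2 w (compress (PP hn2 w) (A (opIdx p))) = _
      show phiL hn2 w (PP hn2 w * A (opIdx p) * PP hn2 w) = _
      rw [phi_compress hn2 w hw]
    have hli : LinearIndependent ℂ (fun p : R k => phiL hn2 w (A (opIdx p))) := by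
      rw [Fintype.linearIndependent_iff]
      intro g hg p
      have hq : ∀ q : R k, (∑ p' : R k, g p' * Zm aZ w p' q) = 0 := by
        intro q
        have h1 : (∑ p' : R k, g p' • phiL hn2 w (A (opIdx p'))) q.1 q.2
            = (0 : Matrix (Fin k) (Fin k) ℂ) q.1 q.2 := by rw [hg]
        rw [Matrix.sum_apply, Matrix.zero_apply] at h1
        rw [← h1]
        refine Finset.sum_congr rfl (fun p' _ => ?_)
        rw [Matrix.smul_apply, smul_eq_mul]
        congr 1
        have hzz := phiZ hn2 w (fun p'' => A (opIdx p'')) p' q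
        rw [hzz]
      have hz : Matrix.vecMul g (Zm aZ w) = 0 := by
        funext q
        rw [show Matrix.vecMul g (Zm aZ w) q = ∑ p' : R k, g p' * Zm aZ w p' q from rfl,
          hq q]
        rfl
      have hZu : IsUnit (Zm aZ w).det := isUnit_iff_ne_zero.mpr hdet
      have hg0 : g = 0 := by
        have h2 := congrArg (fun v => Matrix.vecMul v (Zm aZ w)⁻¹) hz
        simp only [Matrix.vecMul_vecMul] at h2
        rwa [Matrix.mul_nonsing_inv _ hZu, Matrix.vecMul_one, Matrix.zero_vecMul] at h2
      exact congrFun hg0 p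
    have hs1 : Submodule.span ℂ (Set.range (fun p : R k => phiL hn2 w (A (opIdx p))))
        ≤ LinearMap.range f := by
      rw [Submodule.span_le]
      rintro y ⟨p, rfl⟩
      exact hfval p
    have hge : k * k ≤ Module.finrank ℂ (LinearMap.range f) := by
      have h1 := finrank_span_eq_card hli
      have h2 : Fintype.card (R k) = k * k := by
        simp [Fintype.card_prod]
      rw [h2] at h1
      exact le_trans (le_of_eq h1.symm) (Submodule.finrank_mono hs1)
    have hle : Module.finrank ℂ (LinearMap.range f) ≤ k * k := by
      have h1 := Submodule.finrank_le (LinearMap.range f)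
      have h2 : Module.finrank ℂ (Matrix (Fin k) (Fin k) ℂ) = k * k := by
        rw [Module.finrank_matrix]
        simp
      rwa [h2] at h1
    rw [hfr1]
    have : Module.finrank ℂ (LinearMap.range f) = k * k := le_antisymm hle hge
    rw [this]
    ring
end
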